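/- arXiv:1206.5581 — 8 statements merged into one kernel-verified Lean document; each statement's English description precedes it below -/
import Mathlib

section
/- If (X, τ) is a Baire topological space, then the space X(τ) := {x ∈ (τ⁺)^ω : ⋂_{n<ω} x(n) ≠ ∅}, viewed as a subspace of the product space (τ⁺)^ω where τ⁺ (the collection of nonempty open subsets of X) carries the discrete topology, is also a Baire space. -/
open Set Topology

/-- The set of nonempty open subsets of `X` (denoted `τ⁺` in the paper). -/
abbrev PosOpen (X : Type) [TopologicalSpace X] : Type :=
  {U : Set X // IsOpen U ∧ U.Nonempty}

/-- `τ⁺` carries the discrete topology. -/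
instance (priority := high) PosOpen.topology (X : Type) [TopologicalSpace X] :
    TopologicalSpace (PosOpen X) := ⊥

/-- `X(τ) = {x ∈ (τ⁺)^ω : ⋂ₙ x(n) ≠ ∅}`, a subspace of the product `(τ⁺)^ω`. -/
abbrev SeqSpace (X : Type) [TopologicalSpace X] : Type :=
  {x : ℕ → PosOpen X // (⋂ n, ((x n).1 : Set X)).Nonempty}

namespace Stmt0Aux

variable {X : Type} [TopologicalSpace X]

instance : DiscreteTopology (PosOpen X) := ⟨rfl⟩

/-- The open set determined by a finite condition: the intersection of its entries. -/
def W : List (PosOpen X) → Set X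
  | [] => Set.univ
  | U :: t => U.1 ∩ W t

lemma isOpen_W : ∀ t : List (PosOpen X), IsOpen (W t)
  | [] => isOpen_univ
  | U :: t => U.2.1.inter (isOpen_W t)

lemma mem_W_iff {t : List (PosOpen X)} {y : X} : y ∈ W t ↔ ∀ U ∈ t, y ∈ U.1 := by
  induction t with
  | nil => simp [W]
  | cons V t ih => simp [W, ih]

lemma W_subset_of_mem {t : List (PosOpen X)} {U : PosOpen X} (h : U ∈ t) : W t ⊆ U.1 :=
  fun _ hy => mem_W_iff.1 hy U h

lemma W_subset_getElem {t : List (PosOpen X)} {n : ℕ} (h : n < t.length) :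
    W t ⊆ (t[n]'h).1 := W_subset_of_mem (List.getElem_mem h)

lemma W_anti {t t' : List (PosOpen X)} (h : t <+: t') : W t' ⊆ W t := fun _ hy =>
  mem_W_iff.2 fun U hU => mem_W_iff.1 hy U (h.subset hU)

/-- The cylinder in `SeqSpace X` determined by a finite condition. -/
def cyl (t : List (PosOpen X)) : Set (SeqSpace X) :=
  {x | ∀ n (h : n < t.length), x.1 n = t[n]'h}

lemma cyl_anti {t t' : List (PosOpen X)} (h : t <+: t') : cyl t' ⊆ cyl t := by
  intro x hx n hn
  exact (hx n (lt_of_lt_of_le hn h.length_le)).trans (h.getElem hn).symm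

lemma W_nonempty_of_mem_cyl {t : List (PosOpen X)} {x : SeqSpace X} (hx : x ∈ cyl t) :
    (W t).Nonempty := by
  obtain ⟨y, hy⟩ := x.2
  refine ⟨y, mem_W_iff.2 fun U hU => ?_⟩
  obtain ⟨n, hn, rfl⟩ := List.mem_iff_getElem.1 hU
  rw [← hx n hn]
  exact Set.mem_iInter.1 hy n

lemma cyl_nonempty {t : List (PosOpen X)} (h : (W t).Nonempty) : (cyl t).Nonempty := by
  classical
  refine ⟨⟨fun n => if hn : n < t.length then t[n]'hn else ⟨W t, isOpen_W t, h⟩, ?_⟩, ?_⟩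
  · obtain ⟨y, hy⟩ := h
    refine ⟨y, Set.mem_iInter.2 fun n => ?_⟩
    by_cases hn : n < t.length
    · simpa only [hn, dif_pos] using W_subset_getElem hn hy
    · simpa only [hn, dif_neg, not_false_iff] using hy
  · intro n hn
    simp [hn]

lemma isOpen_cyl (t : List (PosOpen X)) : IsOpen (cyl t) := by
  have : cyl t = ⋂ n : Fin t.length,
      (fun x : SeqSpace X => x.1 n.1) ⁻¹' {t[n.1]'n.2} := by
    ext x
    simp only [Set.mem_iInter, Set.mem_preimage, Set.mem_singleton_iff]
    exact ⟨fun h n => h n.1 n.2, fun h n hn => h ⟨n, hn⟩⟩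
  rw [this]
  exact isOpen_iInter_of_finite fun n =>
    (isOpen_discrete _).preimage ((continuous_apply n.1).comp continuous_subtype_val)

/-- The condition recording the first `n` values of `z`. -/
def icyl (z : ℕ → PosOpen X) (n : ℕ) : List (PosOpen X) :=
  List.ofFn fun i : Fin n => z i

@[simp] lemma icyl_length (z : ℕ → PosOpen X) (n : ℕ) : (icyl z n).length = n := by
  simp [icyl]

lemma icyl_getElem (z : ℕ → PosOpen X) {n i : ℕ} (h : i < (icyl z n).length) :
    (icyl z n)[i]'h = z i := by
  simp [icyl]

lemma prefix_icyl {t : List (PosOpen X)} {z : ℕ → PosOpen X} {n : ℕ}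
    (hn : t.length ≤ n) (h : ∀ i (hi : i < t.length), z i = t[i]'hi) : t <+: icyl z n := by
  rw [List.prefix_iff_eq_take]
  apply List.ext_getElem
  · simp [Nat.min_eq_left (by simpa using hn)]
  · intro i h1 h2
    have hi : i < t.length := h1
    rw [List.getElem_take]
    rw [icyl_getElem]
    exact (h i hi).symm

lemma icyl_prefix (z : ℕ → PosOpen X) {n m : ℕ} (h : n ≤ m) : icyl z n <+: icyl z m := by
  apply prefix_icyl (by simpa using h)
  intro i hi
  rw [icyl_getElem]

lemma mem_cyl_icyl (x : SeqSpace X) (n : ℕ) : x ∈ cyl (icyl x.1 n) := by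
  intro i hi
  rw [icyl_getElem]

/-- Every point of an open set of `SeqSpace X` lies in a cylinder inside it. -/
lemma exists_cyl {O : Set (SeqSpace X)} (hO : IsOpen O) {x : SeqSpace X} (hx : x ∈ O) :
    ∃ n : ℕ, cyl (icyl x.1 n) ⊆ O := by
  obtain ⟨U, hU, rfl⟩ := isOpen_induced_iff.1 hO
  obtain ⟨I, u, hu, hsub⟩ := isOpen_pi_iff.1 hU x.1 hx
  refine ⟨(I.sup id) + 1, fun z hz => ?_⟩
  refine hsub ?_
  intro i hi
  have h1 : i < (I.sup id) + 1 := Nat.lt_succ_of_le (Finset.le_sup (f := id) hi)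
  have h2 : i < (icyl x.1 ((I.sup id) + 1)).length := by simpa using h1
  have := hz i h2
  rw [icyl_getElem] at this
  rw [this]
  exact (hu i hi).2

/-- Density extension: any condition extends to a strictly longer one whose cylinder lies
inside a given dense open set. -/
lemma ext_exists {D : Set (SeqSpace X)} (hDo : IsOpen D) (hDd : Dense D)
    (t : List (PosOpen X)) (ht : (W t).Nonempty) :
    ∃ t', t <+: t' ∧ t.length < t'.length ∧ (W t').Nonempty ∧ cyl t' ⊆ D := by
  obtain ⟨z, hz⟩ := hDd.inter_open_nonempty (cyl t) (isOpen_cyl t) (cyl_nonempty ht)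
  obtain ⟨n₀, hsub⟩ := exists_cyl hDo hz.2
  refine ⟨icyl z.1 (max n₀ (t.length + 1)), ?_, ?_, ?_, ?_⟩
  · exact prefix_icyl (le_trans (Nat.le_succ _) (le_max_right _ _)) fun i hi => hz.1 i hi
  · simpa using lt_of_lt_of_le (Nat.lt_succ_self _) (le_max_right _ _)
  · exact W_nonempty_of_mem_cyl (mem_cyl_icyl z _)
  · exact (cyl_anti (icyl_prefix z.1 (le_max_left _ _))).trans hsub

lemma W_append (t s : List (PosOpen X)) : W (t ++ s) = W t ∩ W s := by
  induction t with
  | nil => simp [W]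
  | cons V t ih => simp [W, ih, Set.inter_assoc]

/-- Maximal pairwise disjoint family of extensions into a dense open set, whose union of
`W`-sets is dense in `W t`. -/
lemma maxfam {D : Set (SeqSpace X)} (hDo : IsOpen D) (hDd : Dense D)
    (t : List (PosOpen X)) (ht : (W t).Nonempty) :
    ∃ F : Set (List (PosOpen X)),
      (∀ s ∈ F, t <+: s ∧ t.length < s.length ∧ (W s).Nonempty ∧ cyl s ⊆ D) ∧
      (∀ s ∈ F, ∀ s' ∈ F, s ≠ s' → Disjoint (W s) (W s')) ∧
      W t ⊆ closure (⋃ s ∈ F, W s) := by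
  classical
  set A : Set (Set (List (PosOpen X))) :=
    {F | (∀ s ∈ F, t <+: s ∧ t.length < s.length ∧ (W s).Nonempty ∧ cyl s ⊆ D) ∧
         (∀ s ∈ F, ∀ s' ∈ F, s ≠ s' → Disjoint (W s) (W s'))} with hA
  obtain ⟨F, hF⟩ := zorn_subset A (by
    intro c hcA hc
    refine ⟨⋃₀ c, ⟨?_, ?_⟩, fun s hs => Set.subset_sUnion_of_mem hs⟩
    · rintro s ⟨F₁, hF₁, hs⟩
      exact (hcA hF₁).1 s hs
    · rintro s ⟨F₁, hF₁, hs⟩ s' ⟨F₂, hF₂, hs'⟩ hne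
      rcases eq_or_ne F₁ F₂ with rfl | hF12
      · exact (hcA hF₁).2 s hs s' hs' hne
      · rcases hc.total hF₁ hF₂ with h | h
        · exact (hcA hF₂).2 s (h hs) s' hs' hne
        · exact (hcA hF₁).2 s hs s' (h hs') hne)
  refine ⟨F, hF.prop.1, hF.prop.2, ?_⟩
  by_contra hcl
  obtain ⟨y, hyW, hyU⟩ : ∃ y ∈ W t, y ∉ closure (⋃ s ∈ F, W s) := by
    by_contra h
    push_neg at h
    exact hcl h
  set V : Set X := W t ∩ (closure (⋃ s ∈ F, W s))ᶜ with hV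
  have hVopen : IsOpen V := (isOpen_W t).inter isClosed_closure.isOpen_compl
  have hVne : V.Nonempty := ⟨y, hyW, hyU⟩
  set Vp : PosOpen X := ⟨V, hVopen, hVne⟩ with hVp
  have hWtV : W (t ++ [Vp]) = W t ∩ V := by
    rw [W_append]; simp [W]; rfl
  obtain ⟨s', hpre, hlen, hs'ne, hs'D⟩ :=
    ext_exists hDo hDd (t ++ [Vp]) (by rw [hWtV]; exact ⟨y, hyW, hyW, hyU⟩)
  have hWs'V : W s' ⊆ V := by
    refine (W_anti hpre).trans ?_
    rw [hWtV]; exact Set.inter_subset_right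
  have hs'new : s' ∉ F := by
    intro hmem
    obtain ⟨p, hp⟩ := hs'ne
    have h1 : p ∈ closure (⋃ s ∈ F, W s) :=
      subset_closure (Set.mem_biUnion hmem hp)
    exact (hWs'V hp).2 h1
  have hmemA : F ∪ {s'} ∈ A := by
    constructor
    · rintro s (hs | hs)
      · exact hF.prop.1 s hs
      · rcases hs with rfl
        refine ⟨(List.prefix_append t [Vp]).trans hpre, ?_, hs'ne, hs'D⟩
        calc t.length < (t ++ [Vp]).length := by simp
          _ < s.length := hlen
    · have key : ∀ s ∈ F, Disjoint (W s') (W s) := by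
        intro s hs
        rw [Set.disjoint_left]
        intro p hp hps
        exact (hWs'V hp).2 (subset_closure (Set.mem_biUnion hs hps))
      rintro s (hs | hs) s'' (hs'' | hs'') hne
      · exact hF.prop.2 s hs s'' hs'' hne
      · rcases hs'' with rfl
        exact (key s hs).symm
      · rcases hs with rfl
        exact key s'' hs''
      · rcases hs with rfl; rcases hs'' with rfl; exact absurd rfl hne
  have := hF.2 hmemA Set.subset_union_left
  exact hs'new (this (Set.mem_union_right _ rfl))

/-- Main density lemma: given countably many dense open subsets of `SeqSpace X` and a
condition with nonempty `W`, there is a point of the cylinder in all of them. -/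
lemma main [BaireSpace X] (D : ℕ → Set (SeqSpace X)) (hDo : ∀ k, IsOpen (D k))
    (hDd : ∀ k, Dense (D k)) (t₀ : List (PosOpen X)) (h₀ : (W t₀).Nonempty) :
    ∃ x : SeqSpace X, x ∈ cyl t₀ ∧ ∀ k, x ∈ D k := by
  classical
  have maxf : ∀ (k : ℕ) (t : List (PosOpen X)), (W t).Nonempty →
      ∃ F : Set (List (PosOpen X)),
      (∀ s ∈ F, t <+: s ∧ t.length < s.length ∧ (W s).Nonempty ∧ cyl s ⊆ D k) ∧
      (∀ s ∈ F, ∀ s' ∈ F, s ≠ s' → Disjoint (W s) (W s')) ∧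
      W t ⊆ closure (⋃ s ∈ F, W s) := fun k t ht => maxfam (hDo k) (hDd k) t ht
  choose! Fam h1 h2 h3 using maxf
  obtain ⟨t₁, ht01, ht01len, ht₁ne, ht₁D⟩ := ext_exists (hDo 0) (hDd 0) t₀ h₀
  set Lev : ℕ → Set (List (PosOpen X)) :=
    fun k => Nat.rec {t₁} (fun k L => ⋃ t ∈ L, Fam (k + 1) t) k with hLev
  have LevS : ∀ k, Lev (k + 1) = ⋃ t ∈ Lev k, Fam (k + 1) t := fun k => rfl
  have I1 : ∀ k, ∀ t ∈ Lev k, (W t).Nonempty ∧ t₀ <+: t ∧ k < t.length ∧ cyl t ⊆ D k := by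
    intro k
    induction k with
    | zero =>
      intro t ht
      rcases Set.mem_singleton_iff.1 ht with rfl
      exact ⟨ht₁ne, ht01, Nat.lt_of_le_of_lt (Nat.zero_le _) ht01len, ht₁D⟩
    | succ k ih =>
      intro t ht
      rw [LevS] at ht
      obtain ⟨s, hs, hts⟩ := Set.mem_iUnion₂.1 ht
      obtain ⟨hsne, hs0, hsk, _⟩ := ih s hs
      obtain ⟨hp, hl, hne, hD⟩ := h1 (k + 1) s hsne t hts
      exact ⟨hne, hs0.trans hp, Nat.lt_of_le_of_lt hsk hl, hD⟩
  have I2 : ∀ k, ∀ t ∈ Lev k, ∀ t' ∈ Lev k, t ≠ t' → Disjoint (W t) (W t') := by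
    intro k
    induction k with
    | zero =>
      intro t ht t' ht' hne
      rcases Set.mem_singleton_iff.1 ht with rfl
      rcases Set.mem_singleton_iff.1 ht' with rfl
      exact absurd rfl hne
    | succ k ih =>
      intro t ht t' ht' hne
      rw [LevS] at ht ht'
      obtain ⟨s, hs, hts⟩ := Set.mem_iUnion₂.1 ht
      obtain ⟨s', hs', hts'⟩ := Set.mem_iUnion₂.1 ht'
      rcases eq_or_ne s s' with rfl | hss
      · exact h2 (k + 1) s (I1 k s hs).1 t hts t' hts' hne
      · exact Disjoint.mono (W_anti (h1 (k + 1) s (I1 k s hs).1 t hts).1)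
          (W_anti (h1 (k + 1) s' (I1 k s' hs').1 t' hts').1) (ih s hs s' hs' hss)
  set G : ℕ → Set X := fun k => ⋃ t ∈ Lev k, W t with hG
  have Gopen : ∀ k, IsOpen (G k) := fun k => isOpen_biUnion fun t _ => isOpen_W t
  have I3 : ∀ k, W t₁ ⊆ closure (G k) := by
    intro k
    induction k with
    | zero =>
      refine subset_trans ?_ subset_closure
      intro p hp
      exact Set.mem_iUnion₂.2 ⟨t₁, rfl, hp⟩
    | succ k ih =>
      have step : G k ⊆ closure (G (k + 1)) := by
        refine Set.iUnion₂_subset fun t ht => ?_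
        refine (h3 (k + 1) t (I1 k t ht).1).trans (closure_mono ?_)
        refine Set.iUnion₂_subset fun s hs => ?_
        intro p hp
        exact Set.mem_iUnion₂.2 ⟨s, by rw [LevS]; exact Set.mem_iUnion₂.2 ⟨t, ht, hs⟩, hp⟩
      calc W t₁ ⊆ closure (G k) := ih
        _ ⊆ closure (closure (G (k + 1))) := closure_mono step
        _ = closure (G (k + 1)) := closure_closure
  set H : ℕ → Set X := fun k => G k ∪ (closure (W t₁))ᶜ with hH
  have Hopen : ∀ k, IsOpen (H k) := fun k => (Gopen k).union isClosed_closure.isOpen_compl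
  have Hdense : ∀ k, Dense (H k) := by
    intro k p
    by_cases hp : p ∈ closure (W t₁)
    · have : p ∈ closure (G k) := closure_minimal (I3 k) isClosed_closure hp
      exact closure_mono Set.subset_union_left this
    · exact subset_closure (Or.inr hp)
  obtain ⟨y, hyW, hyH⟩ := (dense_iInter_of_isOpen Hopen Hdense).inter_open_nonempty
    (W t₁) (isOpen_W t₁) ht₁ne
  have hyG : ∀ k, y ∈ G k := by
    intro k
    rcases Set.mem_iInter.1 hyH k with h | h
    · exact h
    · exact absurd (subset_closure hyW) h
  have hex : ∀ k, ∃ t, t ∈ Lev k ∧ y ∈ W t := by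
    intro k
    obtain ⟨t, ht, hyt⟩ := Set.mem_iUnion₂.1 (hyG k)
    exact ⟨t, ht, hyt⟩
  choose u hu hyu using hex
  have uniq : ∀ k t, t ∈ Lev k → y ∈ W t → t = u k := by
    intro k t ht hyt
    by_contra hne
    exact Set.disjoint_left.1 (I2 k t ht (u k) (hu k) hne) hyt (hyu k)
  have step : ∀ k, u k <+: u (k + 1) := by
    intro k
    have := hu (k + 1)
    rw [LevS] at this
    obtain ⟨s, hs, hmem⟩ := Set.mem_iUnion₂.1 this
    obtain ⟨hp, _, _, _⟩ := h1 (k + 1) s (I1 k s hs).1 _ hmem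
    have hys : y ∈ W s := W_anti hp (hyu (k + 1))
    rw [uniq k s hs hys] at hp
    exact hp
  have mono : ∀ k m, k ≤ m → u k <+: u m := by
    intro k m hkm
    induction m, hkm using Nat.le_induction with
    | base => exact List.prefix_refl _
    | succ m hkm ih => exact ih.trans (step m)
  have len : ∀ n, n < (u (n + 1)).length := fun n =>
    Nat.lt_of_succ_lt (I1 (n + 1) _ (hu (n + 1))).2.2.1
  have agree : ∀ a b n (ha : n < (u a).length) (hb : n < (u b).length),
      (u a)[n]'ha = (u b)[n]'hb := by
    intro a b n ha hb
    rcases le_total a b with h | h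
    · exact (mono a b h).getElem ha
    · exact ((mono b a h).getElem hb).symm
  have hyx : y ∈ ⋂ n, (((fun n => (u (n + 1))[n]'(len n) : ℕ → PosOpen X) n).1 : Set X) :=
    Set.mem_iInter.2 fun n => W_subset_getElem (len n) (hyu (n + 1))
  refine ⟨⟨fun n => (u (n + 1))[n]'(len n), y, hyx⟩, ?_, ?_⟩
  · refine cyl_anti (I1 0 _ (hu 0)).2.1 ?_
    intro n hn
    exact agree (n + 1) 0 n (len n) hn
  · intro k
    refine (I1 k _ (hu k)).2.2.2 ?_
    intro n hn
    exact agree (n + 1) k n (len n) hn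

end Stmt0Aux

theorem stmt0 (X : Type) [TopologicalSpace X] [BaireSpace X] :
    BaireSpace (SeqSpace X) := by
  refine ⟨fun f hfo hfd => ?_⟩
  rw [dense_iff_inter_open]
  intro O hO hOne
  obtain ⟨x₀, hx₀⟩ := hOne
  obtain ⟨n, hsub⟩ := Stmt0Aux.exists_cyl hO hx₀
  have hW := Stmt0Aux.W_nonempty_of_mem_cyl (Stmt0Aux.mem_cyl_icyl x₀ n)
  obtain ⟨x, hx1, hx2⟩ := Stmt0Aux.main f hfo hfd _ hW
  exact ⟨x, hsub hx1, Set.mem_iInter.2 hx2⟩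
end

section
/- If N is a nowhere dense subset of a topological space (X, τ), then φ⁻¹[N] is nowhere dense in X(τ), where φ : X(τ) → X is any function satisfying φ(x) ∈ ⋂_{n<ω} x(n) for every x ∈ X(τ). -/
open Set Topology

theorem stmt1 (X : Type) [TopologicalSpace X]
    (φ : SeqSpace X → X) (hφ : ∀ x : SeqSpace X, φ x ∈ ⋂ n, ((x.1 n).1 : Set X))
    (N : Set X) (hN : IsNowhereDense N) :
    IsNowhereDense (φ ⁻¹' N) := by
  have hdisc : DiscreteTopology (PosOpen X) := ⟨rfl⟩
  rw [IsNowhereDense, Set.eq_empty_iff_forall_notMem]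
  intro y hy
  obtain ⟨U, hUopen, hUeq⟩ :=
    isOpen_induced_iff.mp (isOpen_interior (s := closure (φ ⁻¹' N)))
  have hyU : y.1 ∈ U := by
    have := hy; rw [← hUeq] at this; exact this
  obtain ⟨I, u, hu, hpi⟩ := isOpen_pi_iff.mp hUopen y.1 hyU
  set V : Set X := ⋂ n ∈ I, ((y.1 n).1 : Set X) with hV
  have hVopen : IsOpen V := isOpen_biInter_finset fun n _ => (y.1 n).2.1
  have hVne : V.Nonempty :=
    y.2.mono (fun a ha => mem_iInter₂.mpr fun n _ => mem_iInter.mp ha n)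
  set W : Set X := V \ closure N with hW
  have hWopen : IsOpen W := hVopen.sdiff isClosed_closure
  have hWne : W.Nonempty := by
    rw [hW, diff_nonempty]
    intro hsub
    have h2 : V ⊆ interior (closure N) := hVopen.subset_interior_iff.mpr hsub
    rw [hN] at h2
    exact hVne.ne_empty (subset_empty_iff.mp h2)
  set m : ℕ := (I.sup id) + 1 with hm
  have hmI : m ∉ I := fun h =>
    Nat.lt_irrefl _ (Nat.lt_succ_of_le (Finset.le_sup (f := id) h))
  set zfun : ℕ → PosOpen X := fun n => if n ∈ I then y.1 n else ⟨W, hWopen, hWne⟩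
    with hzfun
  have hWsub : W ⊆ ⋂ n, ((zfun n).1 : Set X) := by
    intro a ha
    refine mem_iInter.mpr fun n => ?_
    by_cases h : n ∈ I
    · simp only [hzfun, if_pos h]
      exact mem_iInter₂.mp ha.1 n h
    · simp only [hzfun, if_neg h]
      exact ha
  set z : SeqSpace X := ⟨zfun, hWne.mono hWsub⟩ with hz
  have hzcl : z ∈ closure (φ ⁻¹' N) := by
    have hzU : z.1 ∈ U := by
      apply hpi
      intro n hn
      have hn' : n ∈ I := Finset.mem_coe.mp hn
      show (if n ∈ I then y.1 n else ⟨W, hWopen, hWne⟩) ∈ u n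
      rw [if_pos hn']
      exact (hu n hn').2
    have hzU' : z ∈ Subtype.val ⁻¹' U := hzU
    rw [hUeq] at hzU'
    exact interior_subset hzU'
  -- the open box fixing coordinates in I ∪ {m}
  set B : Set (SeqSpace X) :=
    Subtype.val ⁻¹' ((↑(I ∪ {m}) : Set ℕ).pi fun n => {zfun n}) with hB
  have hBopen : IsOpen B := by
    apply Continuous.isOpen_preimage continuous_subtype_val
    exact isOpen_set_pi (Finset.finite_toSet _) fun n _ => isOpen_discrete _
  have hzB : z ∈ B := by
    intro n _
    rfl
  obtain ⟨w, hwB, hwN⟩ := mem_closure_iff.mp hzcl B hBopen hzB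
  have hwm : w.1 m = ⟨W, hWopen, hWne⟩ := by
    have := hwB m (by simp)
    simp only [mem_singleton_iff] at this
    exact this.trans (if_neg hmI)
  have hφw : φ w ∈ W := by
    have := mem_iInter.mp (hφ w) m
    rwa [hwm] at this
  exact hφw.2 (subset_closure hwN)
end

section
/- The function φ : X(τ) → X defined by choosing φ(x) ∈ ⋂_{n<ω} x(n) is Baire-measurable: for every open U ⊆ X, the preimage φ⁻¹[U] has the Baire property in X(τ), i.e., equals an open set modulo a meager set. -/
open Set Topology

instance (X : Type) [TopologicalSpace X] : DiscreteTopology (PosOpen X) := ⟨rfl⟩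

lemma cyl_open (X : Type) [TopologicalSpace X] (m : ℕ) (s : ℕ → PosOpen X) :
    IsOpen {z : SeqSpace X | ∀ i < m, z.1 i = s i} := by
  have h : {z : SeqSpace X | ∀ i < m, z.1 i = s i}
      = ⋂ i ∈ Finset.range m, (fun z : SeqSpace X => z.1 i) ⁻¹' {s i} := by
    ext z; simp
  rw [h]
  exact isOpen_biInter_finset fun i _ =>
    (isOpen_discrete {s i}).preimage ((continuous_apply i).comp continuous_subtype_val)

theorem stmt3 (X : Type) [TopologicalSpace X]
    (φ : SeqSpace X → X) (hφ : ∀ x : SeqSpace X, φ x ∈ ⋂ n, ((x.1 n).1 : Set X))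
    (U : Set X) (hU : IsOpen U) :
    ∃ V : Set (SeqSpace X), IsOpen V ∧ IsMeagre (symmDiff (φ ⁻¹' U) V) := by
  classical
  set V : Set (SeqSpace X) := {x | ∃ n, ((x.1 n).1 : Set X) ⊆ U} with hVdef
  have hVopen : IsOpen V := by
    have h : V = ⋃ n, (fun z : SeqSpace X => z.1 n) ⁻¹' {W : PosOpen X | (W.1 : Set X) ⊆ U} := by
      ext z; simp [hVdef]
    rw [h]
    exact isOpen_iUnion fun n =>
      (isOpen_discrete _).preimage ((continuous_apply n).comp continuous_subtype_val)
  have hVsub : V ⊆ φ ⁻¹' U := by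
    rintro z ⟨n, hn⟩
    exact hn ((mem_iInter.mp (hφ z)) n)
  refine ⟨V, hVopen, ?_⟩
  have hdiff : symmDiff (φ ⁻¹' U) V = (φ ⁻¹' U) \ V := by
    rw [symmDiff_def]
    have : V \ (φ ⁻¹' U) = ∅ := diff_eq_empty.mpr hVsub
    simp [this, Set.sup_eq_union]
  rw [hdiff]
  set A := (φ ⁻¹' U) \ V with hAdef
  have hND : IsNowhereDense A := by
    unfold IsNowhereDense
    by_contra h
    obtain ⟨x, hx⟩ : (interior (closure A)).Nonempty := nonempty_iff_ne_empty.mpr h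
    obtain ⟨O, hO, hOeq⟩ := isOpen_induced_iff.mp (isOpen_interior (s := closure A))
    have hxO : x.1 ∈ O := by rw [← hOeq] at hx; exact hx
    obtain ⟨I, u, hu, hpi⟩ := isOpen_pi_iff.mp hO x.1 hxO
    set n := (I.sup id) + 1 with hn
    have hIn : ∀ i ∈ I, i < n := fun i hi => Nat.lt_succ_of_le (Finset.le_sup (f := id) hi)
    have hB : ∀ z : SeqSpace X, (∀ i < n, z.1 i = x.1 i) → z ∈ closure A := by
      intro z hz
      have h1 : z.1 ∈ (↑I : Set ℕ).pi u := fun i hi => by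
        rw [hz i (hIn i hi)]; exact (hu i hi).2
      have h2 : z ∈ Subtype.val ⁻¹' O := hpi h1
      rw [hOeq] at h2
      exact interior_subset h2
    by_cases hW : ((⋂ i : Fin n, ((x.1 i).1 : Set X)) ∩ U).Nonempty
    · -- build y with y(n) ⊆ U
      set Wset : Set X := (⋂ i : Fin n, ((x.1 i).1 : Set X)) ∩ U with hWset
      have hWopen : IsOpen Wset :=
        (isOpen_iInter_of_finite fun i : Fin n => (x.1 i).2.1).inter hU
      set W : PosOpen X := ⟨Wset, hWopen, hW⟩ with hWdef
      set yf : ℕ → PosOpen X := fun i => if i < n then x.1 i else W with hyf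
      have hWsub : ∀ m, Wset ⊆ (yf m).1 := by
        intro m p hp
        by_cases hm : m < n
        · simp only [hyf, if_pos hm]
          exact mem_iInter.mp hp.1 ⟨m, hm⟩
        · simp only [hyf, if_neg hm]; exact hp
      have hy : (⋂ m, ((yf m).1 : Set X)).Nonempty := by
        obtain ⟨p, hp⟩ := hW
        exact ⟨p, mem_iInter.mpr fun m => hWsub m hp⟩
      set y : SeqSpace X := ⟨yf, hy⟩ with hydef
      have hyB : y ∈ closure A := hB y (fun i hi => by simp [hydef, hyf, if_pos hi])
      have hB'open := cyl_open X (n + 1) yf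
      have hyB' : y ∈ {z : SeqSpace X | ∀ i < n + 1, z.1 i = yf i} := fun i _ => rfl
      obtain ⟨z, hz1, hz2⟩ := mem_closure_iff.mp hyB _ hB'open hyB'
      refine hz2.2 ⟨n, ?_⟩
      have : z.1 n = yf n := hz1 n (Nat.lt_succ_self n)
      rw [this]
      simp only [hyf, if_neg (lt_irrefl n)]
      exact fun p hp => hp.2
    · -- the cylinder around x is disjoint from φ⁻¹U
      have hxB : x ∈ closure A := hB x (fun _ _ => rfl)
      obtain ⟨z, hz1, hz2⟩ := mem_closure_iff.mp hxB _ (cyl_open X n x.1)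
        (fun i _ => rfl)
      refine hW ⟨φ z, ?_, hz2.1⟩
      refine mem_iInter.mpr fun i => ?_
      have := (mem_iInter.mp (hφ z)) i
      rwa [hz1 i i.2] at this
  rw [isMeagre_iff_countable_union_isNowhereDense]
  exact ⟨{A}, by simpa using hND, countable_singleton A, by simp⟩
end

section
/- If a topological space (X, τ) admits a Kuratowski partition, then the metrizable space X(τ) also admits a Kuratowski partition; namely, the family of preimages {φ⁻¹[F] : F ∈ ℱ} of a Kuratowski partition ℱ of X under a choice function φ (with φ(x) ∈ ⋂_n x(n)) is a Kuratowski partition of X(τ). -/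
open Set Topology

/-- A Kuratowski partition of a topological space: a partition into meager sets
such that the union of every subfamily has the Baire property. -/
def IsKurPartition (Y : Type) [TopologicalSpace Y] (F : Set (Set Y)) : Prop :=
  ⋃₀ F = Set.univ ∧ F.PairwiseDisjoint id ∧ (∀ s ∈ F, IsMeagre s) ∧
    ∀ F' ⊆ F, ∃ U : Set Y, IsOpen U ∧ IsMeagre (symmDiff (⋃₀ F') U)

instance PosOpen.discrete (X : Type) [TopologicalSpace X] :
    DiscreteTopology (PosOpen X) := ⟨rfl⟩

/-- Any meager set is a union-of-two helper. -/
lemma IsMeagre.union' {Y : Type} [TopologicalSpace Y] {s t : Set Y}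
    (hs : IsMeagre s) (ht : IsMeagre t) : IsMeagre (s ∪ t) := by
  rw [IsMeagre, Set.compl_union]
  exact Filter.inter_mem hs ht

lemma IsNowhereDense.isMeagre' {Y : Type} [TopologicalSpace Y] {s : Set Y}
    (hs : IsNowhereDense s) : IsMeagre s := by
  rw [isMeagre_iff_countable_union_isNowhereDense]
  exact ⟨{s}, by simpa using hs, countable_singleton s, by simp⟩

/-- Characterization of nowhere density via open sets. -/
lemma isNowhereDense_of_forall {Y : Type} [TopologicalSpace Y] {s : Set Y}
    (h : ∀ O : Set Y, IsOpen O → O.Nonempty →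
      ∃ O', IsOpen O' ∧ O'.Nonempty ∧ O' ⊆ O ∧ Disjoint O' s) :
    IsNowhereDense s := by
  rw [IsNowhereDense, ← Set.not_nonempty_iff_eq_empty]
  rintro ⟨p, hp⟩
  obtain ⟨O', hO', hne', hsub, hdisj⟩ :=
    h (interior (closure s)) isOpen_interior ⟨p, hp⟩
  obtain ⟨q, hq⟩ := hne'
  have hqc : q ∈ closure s := interior_subset (hsub hq)
  obtain ⟨r, hr1, hr2⟩ := mem_closure_iff.mp hqc O' hO' hq
  exact Set.disjoint_left.mp hdisj hr1 hr2

/-- The key extension lemma: inside any nonempty open subset of `SeqSpace X` one finds a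
nonempty open set `C ⊆ X` such that for any nonempty open `W ⊆ C` there is a nonempty open
subset of the original set all of whose members have some coordinate equal to `W`
(hence `φ` maps them into `W`). -/
lemma seq_key {X : Type} [TopologicalSpace X] (φ : SeqSpace X → X)
    (hφ : ∀ x : SeqSpace X, φ x ∈ ⋂ n, ((x.1 n).1 : Set X))
    (O : Set (SeqSpace X)) (hO : IsOpen O) (hne : O.Nonempty) :
    ∃ C : Set X, IsOpen C ∧ C.Nonempty ∧
      ∀ W : Set X, IsOpen W → W.Nonempty → W ⊆ C →
        ∃ O' : Set (SeqSpace X), IsOpen O' ∧ O'.Nonempty ∧ O' ⊆ O ∧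
          ∀ z ∈ O', φ z ∈ W ∧ ∃ m, ((z.1 m).1 : Set X) ⊆ W := by
  obtain ⟨x, hx⟩ := hne
  obtain ⟨T, hT, rfl⟩ := isOpen_induced_iff.mp hO
  have hxT : x.1 ∈ T := hx
  obtain ⟨I, u, hu, hIu⟩ := isOpen_pi_iff.mp hT x.1 hxT
  set n : ℕ := I.sup id + 1 with hn
  have hIn : ∀ i ∈ I, i < n := by
    intro i hi
    exact Nat.lt_succ_of_le (Finset.le_sup (f := id) hi)
  refine ⟨⋂ i ∈ Finset.range n, ((x.1 i).1 : Set X), ?_, ?_, ?_⟩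
  · exact isOpen_biInter_finset fun i _ => (x.1 i).2.1
  · obtain ⟨p, hp⟩ := x.2
    exact ⟨p, by simpa using fun i _ => Set.mem_iInter.mp hp i⟩
  · intro W hWo hWne hWC
    set y : ℕ → PosOpen X := fun i => if i < n then x.1 i else ⟨W, hWo, hWne⟩ with hy
    have hyW : y n = ⟨W, hWo, hWne⟩ := by simp [hy]
    have hCy : ∀ w ∈ W, ∀ j, w ∈ ((y j).1 : Set X) := by
      intro w hw j
      by_cases hj : j < n
      · have : w ∈ ⋂ i ∈ Finset.range n, ((x.1 i).1 : Set X) := hWC hw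
        simp only [Set.mem_iInter] at this
        simpa [hy, hj] using this j (Finset.mem_range.mpr hj)
      · simpa [hy, hj] using hw
    obtain ⟨w, hw⟩ := id hWne
    have hyne : (⋂ j, ((y j).1 : Set X)).Nonempty :=
      ⟨w, Set.mem_iInter.mpr (hCy w hw)⟩
    set z₀ : SeqSpace X := ⟨y, hyne⟩ with hz₀
    refine ⟨{z : SeqSpace X | ∀ i ≤ n, z.1 i = y i}, ?_, ⟨z₀, fun i _ => rfl⟩, ?_, ?_⟩
    · have : {z : SeqSpace X | ∀ i ≤ n, z.1 i = y i} =
          ⋂ i ∈ Finset.range (n + 1), (fun z : SeqSpace X => z.1 i) ⁻¹' {y i} := by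
        ext z
        simp [Nat.lt_succ_iff]
      rw [this]
      refine isOpen_biInter_finset fun i _ => ?_
      exact (isOpen_discrete {y i}).preimage
        ((continuous_apply i).comp continuous_subtype_val)
    · intro z hz
      refine hIu ?_
      intro i hi
      have hin : i < n := hIn i hi
      have : z.1 i = y i := hz i hin.le
      rw [this]
      have : y i = x.1 i := by simp [hy, hin]
      rw [this]
      exact (hu i hi).2
    · intro z hz
      have hzn : z.1 n = ⟨W, hWo, hWne⟩ := (hz n le_rfl).trans hyW
      have hφz : φ z ∈ ((z.1 n).1 : Set X) := Set.mem_iInter.mp (hφ z) n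
      rw [hzn] at hφz
      exact ⟨hφz, n, by rw [hzn]⟩

lemma nwd_preimage {X : Type} [TopologicalSpace X] (φ : SeqSpace X → X)
    (hφ : ∀ x : SeqSpace X, φ x ∈ ⋂ n, ((x.1 n).1 : Set X))
    {s : Set X} (hs : IsNowhereDense s) : IsNowhereDense (φ ⁻¹' s) := by
  apply isNowhereDense_of_forall
  intro O hO hne
  obtain ⟨C, hCo, hCne, hkey⟩ := seq_key φ hφ O hO hne
  have hWne : (C \ closure s).Nonempty := by
    rw [Set.diff_nonempty]
    intro hsub
    have : C ⊆ interior (closure s) := interior_maximal hsub hCo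
    rw [hs] at this
    exact Set.not_nonempty_empty (hCne.mono this)
  obtain ⟨O', hO', hne', hsub, hmem⟩ :=
    hkey (C \ closure s) (hCo.sdiff isClosed_closure) hWne Set.diff_subset
  refine ⟨O', hO', hne', hsub, Set.disjoint_left.mpr fun z hz hzs => ?_⟩
  exact (hmem z hz).1.2 (subset_closure hzs)

lemma meagre_preimage {X : Type} [TopologicalSpace X] (φ : SeqSpace X → X)
    (hφ : ∀ x : SeqSpace X, φ x ∈ ⋂ n, ((x.1 n).1 : Set X))
    {s : Set X} (hs : IsMeagre s) : IsMeagre (φ ⁻¹' s) := by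
  rw [isMeagre_iff_countable_union_isNowhereDense] at hs ⊢
  obtain ⟨S, hS, hSc, hsub⟩ := hs
  refine ⟨(fun t => φ ⁻¹' t) '' S, ?_, hSc.image _, ?_⟩
  · rintro t ⟨r, hr, rfl⟩
    exact nwd_preimage φ hφ (hS r hr)
  · rw [Set.sUnion_image, ← Set.preimage_iUnion₂]
    intro z hz
    exact Set.preimage_mono (by rwa [Set.sUnion_eq_biUnion] at hsub) hz

lemma bp_aux {X : Type} [TopologicalSpace X] (φ : SeqSpace X → X)
    (hφ : ∀ x : SeqSpace X, φ x ∈ ⋂ n, ((x.1 n).1 : Set X))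
    (U : Set X) (hU : IsOpen U) :
    IsNowhereDense ((φ ⁻¹' U) \ {x : SeqSpace X | ∃ m, ((x.1 m).1 : Set X) ⊆ U}) := by
  apply isNowhereDense_of_forall
  intro O hO hne
  obtain ⟨C, hCo, hCne, hkey⟩ := seq_key φ hφ O hO hne
  by_cases h : (C ∩ U).Nonempty
  · obtain ⟨O', hO', hne', hsub, hmem⟩ :=
      hkey (C ∩ U) (hCo.inter hU) h Set.inter_subset_left
    refine ⟨O', hO', hne', hsub, Set.disjoint_left.mpr fun z hz hzs => ?_⟩
    obtain ⟨m, hm⟩ := (hmem z hz).2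
    exact hzs.2 ⟨m, hm.trans Set.inter_subset_right⟩
  · obtain ⟨O', hO', hne', hsub, hmem⟩ := hkey C hCo hCne Set.Subset.rfl
    refine ⟨O', hO', hne', hsub, Set.disjoint_left.mpr fun z hz hzs => ?_⟩
    exact h ⟨φ z, (hmem z hz).1, hzs.1⟩

theorem stmt4 (X : Type) [TopologicalSpace X]
    (φ : SeqSpace X → X) (hφ : ∀ x : SeqSpace X, φ x ∈ ⋂ n, ((x.1 n).1 : Set X))
    (F : Set (Set X)) (hF : IsKurPartition X F) :
    TopologicalSpace.MetrizableSpace (SeqSpace X) ∧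
      IsKurPartition (SeqSpace X) ((fun s => φ ⁻¹' s) '' F) := by
  obtain ⟨hcov, hdisj, hmeag, hbp⟩ := hF
  constructor
  · -- metrizability
    haveI : TopologicalSpace.MetrizableSpace (ℕ → PosOpen X) := by
      letI : MetricSpace (PosOpen X) := TopologicalSpace.metrizableSpaceMetric _
      letI : MetricSpace (ℕ → PosOpen X) := PiCountable.metricSpace
      infer_instance
    exact Topology.IsEmbedding.subtypeVal.metrizableSpace
  · refine ⟨?_, ?_, ?_, ?_⟩
    · ext z
      simp only [Set.mem_univ, iff_true, Set.mem_sUnion]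
      have : φ z ∈ ⋃₀ F := hcov ▸ Set.mem_univ _
      obtain ⟨s, hs, hzs⟩ := this
      exact ⟨φ ⁻¹' s, ⟨s, hs, rfl⟩, hzs⟩
    · rintro a ⟨s, hs, rfl⟩ b ⟨t, ht, rfl⟩ hab
      have hst : s ≠ t := fun h => hab (by rw [h])
      exact Disjoint.preimage φ (hdisj hs ht hst)
    · rintro t ⟨s, hs, rfl⟩
      exact meagre_preimage φ hφ (hmeag s hs)
    · intro F' hF'
      set G : Set (Set X) := {s ∈ F | φ ⁻¹' s ∈ F'} with hG
      obtain ⟨U, hU, hM⟩ := hbp G (Set.sep_subset _ _)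
      have hGU : ⋃₀ F' = φ ⁻¹' (⋃₀ G) := by
        ext z
        constructor
        · rintro ⟨t, ht, hz⟩
          obtain ⟨s, hsF, rfl⟩ := hF' ht
          exact Set.mem_sUnion.mpr ⟨s, ⟨hsF, ht⟩, hz⟩
        · rintro hz
          obtain ⟨s, ⟨hsF, hsF'⟩, hzs⟩ := Set.mem_sUnion.mp hz
          exact ⟨φ ⁻¹' s, hsF', hzs⟩
      set V : Set (SeqSpace X) := {x : SeqSpace X | ∃ m, ((x.1 m).1 : Set X) ⊆ U} with hV
      have hVopen : IsOpen V := by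
        have : V = ⋃ m, (fun z : SeqSpace X => z.1 m) ⁻¹' {P : PosOpen X | P.1 ⊆ U} := by
          ext z; simp [hV]
        rw [this]
        exact isOpen_iUnion fun m => (isOpen_discrete _).preimage
          ((continuous_apply m).comp continuous_subtype_val)
      refine ⟨V, hVopen, ?_⟩
      have htri : symmDiff (⋃₀ F') V ⊆
          symmDiff (⋃₀ F') (φ ⁻¹' U) ∪ symmDiff (φ ⁻¹' U) V :=
        symmDiff_triangle _ _ _
      refine IsMeagre.mono htri (IsMeagre.union' ?_ ?_)
      · rw [hGU, ← Set.preimage_symmDiff]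
        exact meagre_preimage φ hφ hM
      · have hVsub : V ⊆ φ ⁻¹' U := by
          rintro z ⟨m, hm⟩
          exact hm (Set.mem_iInter.mp (hφ z) m)
        have : symmDiff (φ ⁻¹' U) V = (φ ⁻¹' U) \ V := by
          rw [Set.symmDiff_def, Set.diff_eq_empty.mpr hVsub, Set.union_empty]
        rw [this]
        exact (bp_aux φ hφ U hU).isMeagre'
end

section
/- Every non-meager subset of the Ellentuck space has cardinality continuum (2^ℵ₀). -/
open Set Topology

/-- The points of the Ellentuck space: infinite subsets of `ω`. -/
abbrev EllPt : Type := {A : Set ℕ // A.Infinite}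

/-- The basic set `[a, A] = {B : a ⊑ B ⊆ a ∪ A}`, where `a ⊑ B` means `a` is an
initial segment of `B` (i.e. `a ⊆ B` and every element of `B \ a` exceeds every
element of `a`). -/
def EBasic (a : Finset ℕ) (A : EllPt) : Set EllPt :=
  {B | ↑a ⊆ B.1 ∧ B.1 ⊆ ↑a ∪ A.1 ∧ ∀ m ∈ a, ∀ n ∈ B.1, n ∉ a → m < n}

/-- The Ellentuck topology, generated by the basic sets `[a, A]`. -/
instance (priority := high) EllentuckSpace : TopologicalSpace EllPt :=
  TopologicalSpace.generateFrom {s | ∃ a A, s = EBasic a A}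

namespace EllAux

/-- The tail of `B` past a finite set `a`. -/
noncomputable def tail (B : EllPt) (a : Finset ℕ) : EllPt :=
  ⟨B.1 \ ↑a, B.2.diff a.finite_toSet⟩

lemma ebasic_isOpen (a : Finset ℕ) (A : EllPt) : IsOpen (EBasic a A) :=
  TopologicalSpace.isOpen_generateFrom_of_mem ⟨a, A, rfl⟩

lemma mem_tail_basic {B : EllPt} {a : Finset ℕ} (h1 : ↑a ⊆ B.1)
    (h3 : ∀ m ∈ a, ∀ n ∈ B.1, n ∉ a → m < n) : B ∈ EBasic a (tail B a) := by
  refine ⟨h1, ?_, h3⟩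
  intro n hn
  by_cases hna : n ∈ (a : Set ℕ)
  · exact Or.inl hna
  · exact Or.inr ⟨hn, hna⟩

lemma sub_of_le {B : EllPt} {a b : Finset ℕ} (hab : a ⊆ b)
    (hb : B ∈ EBasic b (tail B b)) (ha : B ∈ EBasic a (tail B a)) :
    EBasic b (tail B b) ⊆ EBasic a (tail B a) := by
  intro C hC
  have hCB : C.1 ⊆ B.1 := by
    intro n hn
    rcases hC.2.1 hn with h | h
    · exact hb.1 h
    · exact h.1
  refine ⟨?_, ?_, ?_⟩
  · exact Set.Subset.trans (by exact_mod_cast Finset.coe_subset.mpr hab) hC.1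
  · intro n hn
    by_cases hna : n ∈ (a : Set ℕ)
    · exact Or.inl hna
    · exact Or.inr ⟨hCB hn, hna⟩
  · intro m hm n hn hna
    exact ha.2.2 m hm n (hCB hn) hna

/-- Basis lemma: every open set containing `B` contains a basic set
`[a, B \ a]` around `B`. -/
lemma basis_lemma {U : Set EllPt} (hU : IsOpen U) :
    ∀ B ∈ U, ∃ a : Finset ℕ, B ∈ EBasic a (tail B a) ∧ EBasic a (tail B a) ⊆ U := by
  have hU' : TopologicalSpace.GenerateOpen {s | ∃ a A, s = EBasic a A} U := hU
  clear hU
  induction hU' with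
  | basic s hs =>
      obtain ⟨a, A, rfl⟩ := hs
      intro B hB
      refine ⟨a, mem_tail_basic hB.1 hB.2.2, ?_⟩
      intro C hC
      refine ⟨hC.1, ?_, hC.2.2⟩
      intro n hn
      rcases hC.2.1 hn with h | h
      · exact Or.inl h
      · rcases hB.2.1 h.1 with h' | h'
        · exact absurd h' h.2
        · exact Or.inr h'
  | univ =>
      intro B _
      refine ⟨∅, mem_tail_basic (by simp) (by simp), fun _ _ => trivial⟩
  | inter u v _ _ ihu ihv =>
      intro B hB
      obtain ⟨a₁, h₁, s₁⟩ := ihu B hB.1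
      obtain ⟨a₂, h₂, s₂⟩ := ihv B hB.2
      have hmem : B ∈ EBasic (a₁ ∪ a₂) (tail B (a₁ ∪ a₂)) := by
        refine mem_tail_basic ?_ ?_
        · rw [Finset.coe_union]
          exact Set.union_subset h₁.1 h₂.1
        · intro m hm n hn hna
          rw [Finset.mem_union] at hm hna
          push_neg at hna
          rcases hm with hm | hm
          · exact h₁.2.2 m hm n hn hna.1
          · exact h₂.2.2 m hm n hn hna.2
      refine ⟨a₁ ∪ a₂, hmem, fun C hC => ⟨?_, ?_⟩⟩
      · exact s₁ (sub_of_le Finset.subset_union_left hmem h₁ hC)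
      · exact s₂ (sub_of_le Finset.subset_union_right hmem h₂ hC)
  | sUnion 𝒮 _ ih =>
      intro B hB
      obtain ⟨t, ht, hBt⟩ := hB
      obtain ⟨a, hm, hs⟩ := ih t ht B hBt
      exact ⟨a, hm, hs.trans (Set.subset_sUnion_of_mem ht)⟩

/-- Every basic set `[a, B]` is nonempty (taking only large elements of `B`). -/
lemma ebasic_nonempty (a : Finset ℕ) (B : EllPt) : ∃ C : EllPt, C ∈ EBasic a B := by
  set N := a.sup id with hN
  have hT : (B.1 \ Set.Iic N).Infinite := B.2.diff (Set.finite_Iic N)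
  refine ⟨⟨↑a ∪ (B.1 \ Set.Iic N), hT.mono Set.subset_union_right⟩, ?_, ?_, ?_⟩
  · exact Set.subset_union_left
  · exact Set.union_subset_union_right _ Set.diff_subset
  · intro m hm n hn hna
    rcases hn with hn | hn
    · exact absurd hn hna
    · have h1 : m ≤ N := Finset.le_sup (f := id) hm
      have h2 : ¬ n ≤ N := hn.2
      omega

/-- If `S` can be avoided inside every basic set, then `S` is meagre. -/
lemma key (S : Set EllPt)
    (H : ∀ (a : Finset ℕ) (A : EllPt), ∃ B : EllPt, B.1 ⊆ A.1 ∧ EBasic a B ∩ S = ∅) :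
    IsMeagre S := by
  have nd : IsNowhereDense S := by
    rw [IsNowhereDense, Set.eq_empty_iff_forall_notMem]
    intro B hB
    obtain ⟨a, _, hsub⟩ := basis_lemma isOpen_interior B hB
    obtain ⟨B', hB'sub, hdisj⟩ := H a (tail B a)
    obtain ⟨C, hC⟩ := ebasic_nonempty a B'
    have hCcl : C ∈ closure S := by
      apply interior_subset
      apply hsub
      refine ⟨hC.1, ?_, hC.2.2⟩
      intro n hn
      rcases hC.2.1 hn with h | h
      · exact Or.inl h
      · exact Or.inr (hB'sub h)
    rw [mem_closure_iff] at hCcl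
    exact (hCcl _ (ebasic_isOpen a B') hC).ne_empty hdisj
  rw [isMeagre_iff_countable_union_isNowhereDense]
  exact ⟨{S}, by simpa using nd, Set.countable_singleton _, by simp⟩

end EllAux

/-- Every non-meager subset of the Ellentuck space has cardinality continuum. -/
theorem stmt7 (S : Set EllPt) (hS : ¬ IsMeagre S) :
    Cardinal.mk S = Cardinal.continuum := by
  -- Step 1: there is a basic set `[a, A]` on which `S` is everywhere positive.
  have hpos : ∃ (a : Finset ℕ) (A : EllPt),
      ∀ B : EllPt, B.1 ⊆ A.1 → (EBasic a B ∩ S).Nonempty := by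
    by_contra h
    push_neg at h
    apply hS
    apply EllAux.key S
    intro a A
    obtain ⟨B, hBA, hne⟩ := h a A
    exact ⟨B, hBA, hne⟩
  obtain ⟨a, A, hpos⟩ := hpos
  -- Step 2: build an almost disjoint family of size continuum inside `A`.
  set g : List Bool → ℕ :=
    fun l => ((Set.Infinite.natEmbedding A.1 A.2) (Encodable.encode l) : ℕ) with hg
  have hginj : Function.Injective g := by
    intro l₁ l₂ h
    exact Encodable.encode_injective
      ((Set.Infinite.natEmbedding A.1 A.2).injective (Subtype.val_injective h))
  have hgmem : ∀ l, g l ∈ A.1 := fun l =>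
    ((Set.Infinite.natEmbedding A.1 A.2) (Encodable.encode l)).2
  set seg : (ℕ → Bool) → ℕ → List Bool :=
    fun x n => (List.range n).map x with hseg
  have hseglen : ∀ x n, (seg x n).length = n := by
    intro x n; simp [hseg]
  have hsegeq : ∀ x y n m, seg x n = seg y m → n = m ∧ ∀ i < n, x i = y i := by
    intro x y n m h
    have hnm : n = m := by
      have := congrArg List.length h
      simpa [hseglen] using this
    subst hnm
    refine ⟨rfl, fun i hi => ?_⟩
    have := congrArg (fun l => l[i]?) h
    simpa [hseg, List.getElem?_map, List.getElem?_range, hi] using this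
  set F : (ℕ → Bool) → ℕ → ℕ := fun x n => g (seg x n) with hF
  have hFinj : ∀ x, Function.Injective (F x) := by
    intro x n m h
    exact (hsegeq x x n m (hginj h)).1
  set BB : (ℕ → Bool) → Set ℕ := fun x => Set.range (F x) with hBB
  have hinf : ∀ x, (BB x).Infinite := fun x => Set.infinite_range_of_injective (hFinj x)
  have hsubA : ∀ x, BB x ⊆ A.1 := by
    rintro x k ⟨n, rfl⟩
    exact hgmem _
  have hAD : ∀ x y : ℕ → Bool, x ≠ y → (BB x ∩ BB y).Finite := by
    intro x y hxy
    have hex : ∃ n, x n ≠ y n := by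
      by_contra hc
      push_neg at hc
      exact hxy (funext hc)
    set n₀ := Nat.find hex with hn₀
    have hsub : BB x ∩ BB y ⊆ F x '' (Set.Iic n₀) := by
      rintro k ⟨⟨n, rfl⟩, ⟨m, hm⟩⟩
      obtain ⟨hnm, hagree⟩ := hsegeq x y n m (hginj hm.symm)
      have hn : n ≤ n₀ := by
        by_contra hgt
        push_neg at hgt
        exact (Nat.find_spec hex) (hagree n₀ hgt)
      exact ⟨n, hn, rfl⟩
    exact Set.Finite.subset ((Set.finite_Iic n₀).image _) hsub
  -- Step 3: pick a point of `S` in each `[a, BB x]`.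
  have hchoice : ∀ x : ℕ → Bool, ∃ C : EllPt, C ∈ EBasic a ⟨BB x, hinf x⟩ ∧ C ∈ S := by
    intro x
    obtain ⟨C, hC⟩ := hpos ⟨BB x, hinf x⟩ (hsubA x)
    exact ⟨C, hC.1, hC.2⟩
  choose C hC1 hC2 using hchoice
  have hCinj : Function.Injective C := by
    intro x y h
    by_contra hxy
    have hsub : (C x).1 ⊆ ↑a ∪ (BB x ∩ BB y) := by
      intro n hn
      rcases (hC1 x).2.1 hn with h1 | h1
      · exact Or.inl h1
      · rcases (hC1 y).2.1 (h ▸ hn) with h2 | h2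
        · exact Or.inl h2
        · exact Or.inr ⟨h1, h2⟩
    exact (C x).2 (Set.Finite.subset (a.finite_toSet.union (hAD x y hxy)) hsub)
  -- Step 4: cardinality computation.
  have hboolcont : Cardinal.mk (ℕ → Bool) = Cardinal.continuum := by
    rw [← Cardinal.two_power_aleph0]
    simp [Cardinal.mk_arrow]
  refine le_antisymm ?_ ?_
  · calc Cardinal.mk S ≤ Cardinal.mk EllPt := Cardinal.mk_set_le S
      _ ≤ Cardinal.mk (Set ℕ) := Cardinal.mk_subtype_le _
      _ = Cardinal.continuum := by
          rw [Cardinal.mk_set, Cardinal.mk_nat, Cardinal.two_power_aleph0]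
  · rw [← hboolcont]
    refine Cardinal.mk_le_of_injective (f := fun x : ℕ → Bool => (⟨C x, hC2 x⟩ : S)) ?_
    intro x y h
    exact hCinj (Subtype.ext_iff.mp h)
end

section
/- In the Ellentuck space, every meager set is nowhere dense; equivalently, the nowhere dense (Ramsey null) subsets of the Ellentuck space form a σ-ideal. -/
open Set Topology

namespace Ell13
def EB (b : Finset ℕ) (A : Set ℕ) : Set EllPt :=
  {B | ↑b ⊆ B.1 ∧ B.1 ⊆ ↑b ∪ A ∧ ∀ m ∈ b, ∀ n ∈ B.1, n ∉ b → m < n}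
lemma EB_mono {b : Finset ℕ} {A A' : Set ℕ} (h : A ⊆ A') : EB b A ⊆ EB b A' :=
  fun _ ⟨h1, h2, h3⟩ => ⟨h1, h2.trans (union_subset_union_right _ h), h3⟩
def abv (b : Finset ℕ) (A : Set ℕ) : Set ℕ := {n ∈ A | ∀ m ∈ b, m < n}
lemma abv_subset (b : Finset ℕ) (A : Set ℕ) : abv b A ⊆ A := fun _ h => h.1
lemma abv_mono (b : Finset ℕ) {A A' : Set ℕ} (h : A ⊆ A') : abv b A ⊆ abv b A' :=
  fun _ hn => ⟨h hn.1, hn.2⟩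
lemma abv_infinite (b : Finset ℕ) {A : Set ℕ} (hA : A.Infinite) : (abv b A).Infinite := by
  have : A \ Iic (b.sup id) ⊆ abv b A := by
    rintro n ⟨hn, hn2⟩
    refine ⟨hn, fun m hm => ?_⟩
    simp only [mem_Iic, not_le] at hn2
    exact lt_of_le_of_lt (Finset.le_sup (f := id) hm) hn2
  exact ((hA.diff (finite_Iic _))).mono this
lemma EB_abv (b : Finset ℕ) (A : Set ℕ) : EB b (abv b A) = EB b A := by
  refine Subset.antisymm (EB_mono (abv_subset b A)) ?_
  rintro X ⟨h1, h2, h3⟩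
  refine ⟨h1, fun n hn => ?_, h3⟩
  by_cases hb : n ∈ (b : Set ℕ)
  · exact Or.inl hb
  · rcases h2 hn with h | h
    · exact absurd h hb
    · exact Or.inr ⟨h, fun m hm => h3 m hm n hn hb⟩
lemma depRec {α : Type*} (init : α) (R : ℕ → α → α → Prop) (h : ∀ n x, ∃ y, R n x y) :
    ∃ f : ℕ → α, f 0 = init ∧ ∀ n, R n (f n) (f (n + 1)) := by
  classical
  let f : ℕ → α := fun n => Nat.rec init (fun n x => Classical.choose (h n x)) n
  exact ⟨f, rfl, fun n => Classical.choose_spec (h n (f n))⟩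
lemma finset_subset_iUnion {t : ℕ → Finset ℕ} (hm : Monotone t) {s : Finset ℕ}
    (hs : ↑s ⊆ ⋃ k, ((t k : Set ℕ))) : ∃ k, s ⊆ t k := by
  classical
  induction s using Finset.induction with
  | empty => exact ⟨0, by simp⟩
  | @insert x s hx ih =>
    obtain ⟨k1, hk1⟩ := ih (fun y hy => hs (by simp only [Finset.coe_insert, Set.mem_insert_iff]; exact Or.inr hy))
    have hxm : (x : ℕ) ∈ ⋃ k, ((t k : Set ℕ)) := hs (by simp)
    obtain ⟨k2, hk2⟩ := mem_iUnion.1 hxm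
    refine ⟨max k1 k2, Finset.insert_subset (hm (le_max_right k1 k2) hk2)
      (hk1.trans (hm (le_max_left _ _)))⟩
lemma infinite_iUnion_finsets {t : ℕ → Finset ℕ} (hc : ∀ k, k ≤ (t k).card) :
    (⋃ k, ((t k : Set ℕ))).Infinite := by
  intro hfin
  have h1 : ∀ k, (t k) ⊆ hfin.toFinset := fun k x hx => by
    simp only [Set.Finite.mem_toFinset]; exact mem_iUnion.2 ⟨k, hx⟩
  have := (hc (hfin.toFinset.card + 1)).trans (Finset.card_le_card (h1 _))
  omega

/-! ### Combinatorial forcing -/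

variable (U : Set EllPt)

def Acc (A : Set ℕ) (b : Finset ℕ) : Prop := EB b A ⊆ U
def Rej (A : Set ℕ) (b : Finset ℕ) : Prop := ∀ B ⊆ A, B.Infinite → ¬ Acc U B b
def Dec (A : Set ℕ) (b : Finset ℕ) : Prop := Acc U A b ∨ Rej U A b

variable {U}

lemma Acc.mono {A B : Set ℕ} {b} (h : B ⊆ A) (hA : Acc U A b) : Acc U B b :=
  (EB_mono h).trans hA
lemma Rej.mono {A B : Set ℕ} {b} (h : B ⊆ A) (hA : Rej U A b) : Rej U B b :=
  fun C hC => hA C (hC.trans h)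
lemma Dec.mono {A B : Set ℕ} {b} (h : B ⊆ A) (hA : Dec U A b) : Dec U B b :=
  hA.imp (Acc.mono h) (Rej.mono h)

lemma exists_dec (b : Finset ℕ) {A : Set ℕ} (hA : A.Infinite) :
    ∃ B ⊆ A, B.Infinite ∧ Dec U B b := by
  by_cases h : Rej U A b
  · exact ⟨A, subset_rfl, hA, Or.inr h⟩
  · simp only [Rej, not_forall] at h
    obtain ⟨B, hBA, hBinf, hBacc⟩ := h
    exact ⟨B, hBA, hBinf, Or.inl (not_not.1 hBacc)⟩

lemma exists_dec_many (S : Finset (Finset ℕ)) {A : Set ℕ} (hA : A.Infinite) :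
    ∃ B ⊆ A, B.Infinite ∧ ∀ b ∈ S, Dec U B b := by
  classical
  induction S using Finset.induction with
  | empty => exact ⟨A, subset_rfl, hA, by simp⟩
  | @insert b S hb ih =>
    obtain ⟨B1, hB1A, hB1inf, hB1⟩ := ih
    obtain ⟨B2, hB2B1, hB2inf, hB2⟩ := exists_dec (U := U) b hB1inf
    refine ⟨B2, hB2B1.trans hB1A, hB2inf, fun c hc => ?_⟩
    rcases Finset.mem_insert.1 hc with rfl | hc
    · exact hB2
    · exact (hB1 c hc).mono hB2B1

lemma dec_transfer {A D : Set ℕ} {b : Finset ℕ} (hD : D.Infinite) (h1 : abv b D ⊆ A)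
    (hdec : Dec U A b) : Dec U D b := by
  rcases hdec with h | h
  · left
    intro X hX
    exact (Acc.mono h1 h) ((EB_abv b D) ▸ hX : X ∈ EB b (abv b D))
  · right
    intro C hCD hCinf hCacc
    have hacc2 : Acc U (abv b C) b := by
      unfold Acc
      rw [EB_abv]
      exact hCacc
    exact h (abv b C) ((abv_mono b hCD).trans h1) (abv_infinite b hCinf) hacc2

/-! ### The deciding fusion -/

def Good (p : Set ℕ × Finset ℕ) : Prop := p.1.Infinite ∧ ∀ m ∈ p.2, ∀ x ∈ p.1, m < x

def Step (U : Set EllPt) (a : Finset ℕ) (p q : Set ℕ × Finset ℕ) : Prop :=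
  q.1 ⊆ p.1 ∧ Good q ∧ (∃ n ∈ p.1, q.2 = insert n p.2 ∧ ∀ x ∈ q.1, n < x) ∧
    ∀ s ⊆ q.2, Dec U q.1 (a ∪ s)

lemma step_exists (a : Finset ℕ) (p : Set ℕ × Finset ℕ) (hp : Good p) :
    ∃ q, Step U a p q := by
  classical
  obtain ⟨hpinf, hplt⟩ := hp
  obtain ⟨n, hn⟩ := hpinf.nonempty
  have hA'' : ({x ∈ p.1 | n < x}).Infinite := by
    have : p.1 \ Iic n ⊆ {x ∈ p.1 | n < x} := by
      rintro x ⟨hx1, hx2⟩; exact ⟨hx1, by simpa using hx2⟩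
    exact (hpinf.diff (finite_Iic n)).mono this
  obtain ⟨B, hBsub, hBinf, hBdec⟩ :=
    exists_dec_many (U := U) ((insert n p.2).powerset.image (fun s => a ∪ s)) hA''
  refine ⟨(B, insert n p.2), fun x hx => (hBsub hx).1, ⟨hBinf, ?_⟩,
    ⟨n, hn, rfl, fun x hx => (hBsub hx).2⟩, fun s hs => ?_⟩
  · intro m hm x hx
    rcases Finset.mem_insert.1 hm with rfl | hm
    · exact (hBsub hx).2
    · exact hplt m hm x (hBsub hx).1
  · exact hBdec _ (Finset.mem_image.2 ⟨s, Finset.mem_powerset.2 hs, rfl⟩)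

/-- Construction 1: a set `D ⊆ abv a A` deciding `a ∪ s` for every finite `s ⊆ D`. -/
lemma exists_deciding (a : Finset ℕ) {A : Set ℕ} (hA : A.Infinite) :
    ∃ D, D ⊆ abv a A ∧ D.Infinite ∧ ∀ s : Finset ℕ, ↑s ⊆ D → Dec U D (a ∪ s) := by
  classical
  obtain ⟨A0, hA0sub, hA0inf, hA0dec⟩ := exists_dec (U := U) a (abv_infinite a hA)
  obtain ⟨f, hf0, hfR⟩ := depRec ((A0, (∅ : Finset ℕ)) : Set ℕ × Finset ℕ)
    (fun _ p q => Good p → Step U a p q)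
    (fun _ p => by
      by_cases hp : Good p
      · obtain ⟨q, hq⟩ := step_exists a p hp
        exact ⟨q, fun _ => hq⟩
      · exact ⟨p, fun h => absurd h hp⟩)
  -- all states are good, so all steps are real steps
  have hgood : ∀ k, Good (f k) := by
    intro k
    induction k with
    | zero => rw [hf0]; exact ⟨hA0inf, by simp⟩
    | succ k ih => exact (hfR k ih).2.1
  have hstep : ∀ k, Step U a (f k) (f (k + 1)) := fun k => hfR k (hgood k)
  -- basic chain facts
  have hmonoA : ∀ j k, j ≤ k → (f k).1 ⊆ (f j).1 := by
    intro j k hjk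
    induction k with
    | zero => cases Nat.le_zero.1 hjk; exact subset_rfl
    | succ k ih =>
      rcases Nat.lt_or_ge j (k+1) with h | h
      · exact (hstep k).1.trans (ih (Nat.lt_succ_iff.1 h))
      · cases le_antisymm hjk h; exact subset_rfl
  have hmonot : Monotone (fun k => (f k).2) := by
    apply monotone_nat_of_le_succ
    intro k
    obtain ⟨n, _, heq, _⟩ := (hstep k).2.2.1
    rw [heq]
    exact Finset.subset_insert _ _
  have ht0 : (f 0).2 = ∅ := by rw [hf0]
  -- the new element is not in the old finset
  have hnotmem : ∀ k n, n ∈ (f k).1 → n ∉ (f k).2 := by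
    intro k n hn hmem
    exact lt_irrefl n ((hgood k).2 n hmem n hn)
  -- stage of each element of D
  set D : Set ℕ := ⋃ j, (((f j).2 : Set ℕ)) with hD
  have hstage : ∀ j y, y ∈ (f j).2 →
      ∃ k, y ∈ (f (k+1)).2 ∧ y ∉ (f k).2 ∧ y ∈ (f k).1 := by
    intro j
    induction j with
    | zero => intro y hy; rw [ht0] at hy; exact absurd hy (Finset.notMem_empty y)
    | succ j ih =>
      intro y hy
      obtain ⟨n, hnA, heq, _⟩ := (hstep j).2.2.1
      rw [heq] at hy
      rcases Finset.mem_insert.1 hy with rfl | hy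
      · exact ⟨j, by rw [heq]; exact Finset.mem_insert_self _ _, hnotmem j y hnA, hnA⟩
      · exact ih y hy
  have hckey : ∀ k y, y ∈ D → y ∉ (f k).2 → y ∈ (f k).1 := by
    intro k y hyD hyk
    obtain ⟨j, hyj⟩ := mem_iUnion.1 hyD
    obtain ⟨k', h1, h2, h3⟩ := hstage j y hyj
    rcases Nat.lt_or_ge k' k with h | h
    · exact absurd (hmonot (Nat.succ_le_of_lt h) h1) hyk
    · exact hmonoA k k' h h3
  have hcard : ∀ k, k ≤ ((f k).2).card := by
    intro k
    induction k with
    | zero => exact Nat.zero_le _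
    | succ k ih =>
      obtain ⟨n, hnA, heq, _⟩ := (hstep k).2.2.1
      rw [heq, Finset.card_insert_of_notMem (hnotmem k n hnA)]
      omega
  have hDinf : D.Infinite := infinite_iUnion_finsets hcard
  have hDsub : D ⊆ A0 := by
    intro y hy
    have := hckey 0 y hy (by rw [ht0]; exact Finset.notMem_empty y)
    rwa [hf0] at this
  refine ⟨D, hDsub.trans hA0sub, hDinf, fun s hs => ?_⟩
  rcases s.eq_empty_or_nonempty with rfl | hsne
  · rw [Finset.union_empty]
    exact dec_transfer hDinf ((abv_subset a D).trans hDsub) hA0dec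
  · -- the stage of the maximum of s
    set M := s.max' hsne with hM
    have hMD : M ∈ D := hs (s.max'_mem hsne)
    obtain ⟨j, hMj⟩ := mem_iUnion.1 hMD
    obtain ⟨k, h1, h2, _⟩ := hstage j M hMj
    obtain ⟨n, hnA, heq, _⟩ := (hstep k).2.2.1
    have hMn : M = n := by
      rw [heq] at h1
      rcases Finset.mem_insert.1 h1 with h | h
      · exact h
      · exact absurd h h2
    -- s is contained in the (k+1)-st finset
    have hsk : s ⊆ (f (k+1)).2 := by
      intro x hx
      by_contra hxk
      have hxA : x ∈ (f (k+1)).1 := hckey (k+1) x (hs hx) hxk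
      have : M < x := (hgood (k+1)).2 M h1 x hxA
      exact absurd (s.le_max' x hx) (not_le.2 this)
    -- everything in D above a ∪ s lies in the (k+1)-st set
    have habvsub : abv (a ∪ s) D ⊆ (f (k+1)).1 := by
      rintro y ⟨hyD, hyabv⟩
      have hyM : M < y := hyabv M (Finset.mem_union_right _ (s.max'_mem hsne))
      refine hckey (k+1) y hyD ?_
      intro hyk
      rw [heq] at hyk
      rcases Finset.mem_insert.1 hyk with rfl | hyk
      · rw [hMn] at hyM; omega
      · have : y < n := (hgood k).2 y hyk n hnA
        rw [hMn] at hyM; omega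
    exact dec_transfer hDinf habvsub ((hstep k).2.2.2 s hsk)


/-! ### Rejection -/

lemma rej_step {D : Set ℕ} {b : Finset ℕ} (hrej : Rej U D b) :
    {n ∈ abv b D | Acc U D (insert n b)}.Finite := by
  classical
  by_contra hinf
  have hinf' : {n ∈ abv b D | Acc U D (insert n b)}.Infinite := hinf
  set C := {n ∈ abv b D | Acc U D (insert n b)} with hC
  refine hrej C (fun n hn => (abv_subset b D) hn.1) hinf' ?_
  rintro X ⟨hX1, hX2, hX3⟩
  have hne : (X.1 \ ↑b).Nonempty := (X.2.diff (b.finite_toSet)).nonempty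
  set n := sInf (X.1 \ ↑b) with hn
  have hnmem : n ∈ X.1 \ ↑b := Nat.sInf_mem hne
  have hnC : n ∈ C := by
    rcases hX2 hnmem.1 with h | h
    · exact absurd h hnmem.2
    · exact h
  apply hnC.2
  refine ⟨?_, ?_, ?_⟩
  · intro x hx
    simp only [Finset.coe_insert, Set.mem_insert_iff] at hx
    rcases hx with rfl | hx
    · exact hnmem.1
    · exact hX1 hx
  · intro y hy
    rcases hX2 hy with h | h
    · exact Or.inl (by simp only [Finset.coe_insert, Set.mem_insert_iff]; exact Or.inr h)
    · exact Or.inr (abv_subset b D h.1)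
  · intro m hm y hy hynb
    have hyb : y ∉ b := fun h => hynb (Finset.mem_insert_of_mem h)
    rcases Finset.mem_insert.1 hm with h | hm
    · have h1 : n ≤ y := Nat.sInf_le ⟨hy, fun hh => hyb (Finset.mem_coe.1 hh)⟩
      have h2 : y ≠ n := fun hh => hynb (by rw [hh]; exact Finset.mem_insert_self n b)
      omega
    · exact hX3 m hm y hy hyb

lemma rej_extend (a : Finset ℕ) {D : Set ℕ} (hDinf : D.Infinite)
    (hDdec : ∀ s : Finset ℕ, ↑s ⊆ D → Dec U D (a ∪ s))
    {E' : Finset ℕ} (hE'D : ↑E' ⊆ D) (hE'rej : ∀ s ⊆ E', Rej U D (a ∪ s)) :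
    ∃ n ∈ D, (∀ m ∈ E', m < n) ∧ ∀ s ⊆ insert n E', Rej U D (a ∪ s) := by
  classical
  set Bad : Set ℕ :=
    ⋃ s ∈ E'.powerset, {n ∈ abv (a ∪ s) D | Acc U D (insert n (a ∪ s))} with hBad
  have hBadfin : Bad.Finite := by
    refine Set.Finite.biUnion (E'.powerset).finite_toSet (fun s hs => ?_)
    exact rej_step (hE'rej s (Finset.mem_powerset.1 hs))
  have hGinf : ((abv (a ∪ E') D) \ Bad).Infinite :=
    (abv_infinite _ hDinf).diff hBadfin
  obtain ⟨n, hnG⟩ := hGinf.nonempty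
  have hnD : n ∈ D := (abv_subset _ _) hnG.1
  have hnbig : ∀ m ∈ a ∪ E', m < n := hnG.1.2
  refine ⟨n, hnD, fun m hm => hnbig m (Finset.mem_union_right _ hm), fun s hs => ?_⟩
  by_cases hns : n ∈ s
  · -- s = insert n (s.erase n)
    set s' := s.erase n with hs'
    have hs'E : s' ⊆ E' := by
      intro x hx
      have hxs := Finset.mem_of_mem_erase hx
      rcases Finset.mem_insert.1 (hs hxs) with rfl | h
      · exact absurd rfl (Finset.ne_of_mem_erase hx)
      · exact h
    have hseq : a ∪ s = insert n (a ∪ s') := by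
      rw [hs', Finset.union_comm a, Finset.union_comm a]
      rw [← Finset.insert_union, Finset.insert_erase hns]
    rw [hseq]
    -- D decides insert n (a ∪ s')
    have hdec : Dec U D (insert n (a ∪ s')) := by
      have : insert n (a ∪ s') = a ∪ insert n s' := by
        rw [Finset.union_insert]
      rw [this]
      refine hDdec (insert n s') ?_
      intro x hx
      simp only [Finset.coe_insert, Set.mem_insert_iff] at hx
      rcases hx with rfl | hx
      · exact hnD
      · exact hE'D (hs'E hx)
    rcases hdec with hacc | hrej
    · exfalso
      apply hnG.2
      refine mem_iUnion₂.2 ⟨s', Finset.mem_powerset.2 hs'E, ?_, hacc⟩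
      refine ⟨hnD, fun m hm => ?_⟩
      rcases Finset.mem_union.1 hm with h | h
      · exact hnbig m (Finset.mem_union_left _ h)
      · exact hnbig m (Finset.mem_union_right _ (hs'E h))
    · exact hrej
  · -- s ⊆ E'
    exact hE'rej s (fun x hx => (Finset.mem_insert.1 (hs hx)).resolve_left
      (fun h => hns (h ▸ hx)))

lemma exists_rejecting (a : Finset ℕ) {D : Set ℕ} (hDinf : D.Infinite)
    (hDdec : ∀ s : Finset ℕ, ↑s ⊆ D → Dec U D (a ∪ s)) (hrej : Rej U D a) :
    ∃ E, E ⊆ D ∧ E.Infinite ∧ ∀ s : Finset ℕ, ↑s ⊆ E → Rej U D (a ∪ s) := by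
  classical
  have hinv0 : (↑(∅ : Finset ℕ) ⊆ D) ∧ ∀ s ⊆ (∅ : Finset ℕ), Rej U D (a ∪ s) := by
    refine ⟨by simp, fun s hs => ?_⟩
    rw [Finset.subset_empty.1 hs, Finset.union_empty]
    exact hrej
  obtain ⟨t, ht0, htR⟩ := depRec (∅ : Finset ℕ)
    (fun _ p q => ((↑p ⊆ D) ∧ ∀ s ⊆ p, Rej U D (a ∪ s)) →
      ((↑q ⊆ D) ∧ (∀ s ⊆ q, Rej U D (a ∪ s)) ∧ ∃ n ∈ D, q = insert n p ∧ ∀ m ∈ p, m < n))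
    (fun _ p => by
      by_cases hp : (↑p ⊆ D) ∧ ∀ s ⊆ p, Rej U D (a ∪ s)
      · obtain ⟨n, hnD, hnlt, hnrej⟩ := rej_extend a hDinf hDdec hp.1 hp.2
        refine ⟨insert n p, fun _ => ⟨?_, hnrej, n, hnD, rfl, hnlt⟩⟩
        intro x hx
        simp only [Finset.coe_insert, Set.mem_insert_iff] at hx
        rcases hx with rfl | hx
        · exact hnD
        · exact hp.1 hx
      · exact ⟨p, fun h => absurd h hp⟩)
  have hinv : ∀ k, (↑(t k) ⊆ D) ∧ ∀ s ⊆ t k, Rej U D (a ∪ s) := by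
    intro k
    induction k with
    | zero => rw [ht0]; exact hinv0
    | succ k ih => exact ⟨(htR k ih).1, (htR k ih).2.1⟩
  have hstep : ∀ k, ∃ n ∈ D, t (k+1) = insert n (t k) ∧ ∀ m ∈ t k, m < n :=
    fun k => (htR k (hinv k)).2.2
  have hmono : Monotone t := by
    apply monotone_nat_of_le_succ
    intro k
    obtain ⟨n, _, heq, _⟩ := hstep k
    rw [heq]; exact Finset.subset_insert _ _
  have hcard : ∀ k, k ≤ (t k).card := by
    intro k
    induction k with
    | zero => exact Nat.zero_le _
    | succ k ih =>
      obtain ⟨n, _, heq, hlt⟩ := hstep k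
      have hnot : n ∉ t k := fun h => lt_irrefl n (hlt n h)
      rw [heq, Finset.card_insert_of_notMem hnot]
      omega
  refine ⟨⋃ k, ((t k : Set ℕ)), ?_, infinite_iUnion_finsets hcard, fun s hs => ?_⟩
  · exact iUnion_subset (fun k => (hinv k).1)
  · obtain ⟨k, hk⟩ := finset_subset_iUnion hmono hs
    exact (hinv k).2 s hk

lemma EB_eq (b : Finset ℕ) (A : EllPt) : EB b A.1 = EBasic b A := rfl

lemma EB_isOpen (b : Finset ℕ) {A : Set ℕ} (hA : A.Infinite) : IsOpen (EB b A) :=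
  TopologicalSpace.GenerateOpen.basic _ ⟨b, ⟨A, hA⟩, rfl⟩

/-- The basic sets form a topological basis. -/
lemma basis : TopologicalSpace.IsTopologicalBasis {s : Set EllPt | ∃ a A, s = EBasic a A} := by
  refine ⟨?_, ?_, rfl⟩
  · rintro t1 ⟨a, A, rfl⟩ t2 ⟨b, B, rfl⟩ X ⟨hXa, hXb⟩
    have hfin : (X.1 \ ↑(a ∪ b)).Infinite := X.2.diff (Finset.finite_toSet _)
    refine ⟨EBasic (a ∪ b) ⟨X.1 \ ↑(a ∪ b), hfin⟩, ⟨_, _, rfl⟩, ?_, ?_⟩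
    · refine ⟨?_, fun n hn => ?_, ?_⟩
      · intro x hx
        simp only [Finset.coe_union, mem_union] at hx
        exact hx.elim (fun h => hXa.1 h) (fun h => hXb.1 h)
      · by_cases hc : n ∈ ((a ∪ b : Finset ℕ) : Set ℕ)
        · exact Or.inl hc
        · exact Or.inr ⟨hn, hc⟩
      · intro m hm n hn hnab
        rcases Finset.mem_union.1 hm with h | h
        · exact hXa.2.2 m h n hn (fun hna => hnab (Finset.mem_union_left _ hna))
        · exact hXb.2.2 m h n hn (fun hnb => hnab (Finset.mem_union_right _ hnb))
    · have hsub : ↑(a ∪ b) ∪ (X.1 \ ↑(a ∪ b)) ⊆ X.1 := by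
        intro x hx
        rcases hx with h | h
        · rcases Finset.mem_coe.1 h with h'
          rcases Finset.mem_union.1 h' with h'' | h''
          · exact hXa.1 h''
          · exact hXb.1 h''
        · exact h.1
      rintro Y ⟨hY1, hY2, hY3⟩
      have hYX : Y.1 ⊆ X.1 := hY2.trans hsub
      constructor
      · refine ⟨fun x hx => hY1 (by simp [Finset.mem_union, hx]), hYX.trans hXa.2.1, ?_⟩
        intro m hm n hn hna
        exact hXa.2.2 m hm n (hYX hn) hna
      · refine ⟨fun x hx => hY1 (by simp [Finset.mem_union, hx]), hYX.trans hXb.2.1, ?_⟩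
        intro m hm n hn hnb
        exact hXb.2.2 m hm n (hYX hn) hnb
  · refine sUnion_eq_univ_iff.2 fun X => ?_
    exact ⟨EBasic ∅ X, ⟨∅, X, rfl⟩, by simp [EBasic]⟩


/-! ### Galvin's lemma -/

lemma galvin {U : Set EllPt} (hUopen : IsOpen U) (hUdense : Dense U) (a : Finset ℕ)
    {A : Set ℕ} (hA : A.Infinite) :
    ∃ B, B ⊆ abv a A ∧ B.Infinite ∧ EB a B ⊆ U := by
  classical
  obtain ⟨D, hDsub, hDinf, hDdec⟩ := exists_deciding (U := U) a hA
  have hdecA : Dec U D a := by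
    have := hDdec ∅ (by simp)
    rwa [Finset.union_empty] at this
  rcases hdecA with hacc | hrej
  · exact ⟨D, hDsub, hDinf, hacc⟩
  exfalso
  obtain ⟨E, hED, hEinf, hErej⟩ := exists_rejecting a hDinf hDdec hrej
  have hEabv : E ⊆ abv a A := hED.trans hDsub
  -- the basic set [a, E] is open and nonempty
  have hX0 : (⟨↑a ∪ E, hEinf.mono subset_union_right⟩ : EllPt) ∈ EB a E := by
    refine ⟨subset_union_left, subset_rfl, fun m hm y hy hya => ?_⟩
    rcases hy with h | h
    · exact absurd (Finset.mem_coe.1 h) hya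
    · exact (hEabv h).2 m hm
  obtain ⟨X, hXE, hXU⟩ :=
    dense_iff_inter_open.1 hUdense (EB a E) (EB_isOpen a hEinf) ⟨_, hX0⟩
  obtain ⟨v, ⟨b, Bpt, rfl⟩, hXv, hvU⟩ := basis.exists_subset_of_mem_open hXU hUopen
  -- contradiction with rejection of a ∪ (b \ a)
  have hbX : ↑b ⊆ X.1 := hXv.1
  have haX : ↑a ⊆ X.1 := hXE.1
  have hsE : ↑(b \ a) ⊆ E := by
    intro x hx
    rw [Finset.coe_sdiff] at hx
    rcases hXE.2.1 (hbX hx.1) with h | h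
    · exact absurd h hx.2
    · exact h
  have hrejab := hErej (b \ a) hsE
  rw [Finset.union_sdiff_self_eq_union] at hrejab
  -- the accepting witness
  have habX : ↑(a ∪ b) ⊆ X.1 := by
    rw [Finset.coe_union]
    exact union_subset haX hbX
  have hCE : X.1 \ ↑(a ∪ b) ⊆ E := by
    rintro x ⟨hx1, hx2⟩
    rcases hXE.2.1 hx1 with h | h
    · exact absurd (by rw [Finset.coe_union]; exact Or.inl h) hx2
    · exact h
  have hCinf : (X.1 \ ↑(a ∪ b)).Infinite := X.2.diff (Finset.finite_toSet _)
  refine hrejab (X.1 \ ↑(a ∪ b)) (hCE.trans hED) hCinf ?_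
  rintro Y ⟨hY1, hY2, hY3⟩
  have hYX : Y.1 ⊆ X.1 := by
    intro y hy
    rcases hY2 hy with h | h
    · exact habX h
    · exact h.1
  refine hvU ⟨(Finset.coe_subset.2 Finset.subset_union_right).trans hY1,
    hYX.trans hXv.2.1, fun m hm y hy hyb => ?_⟩
  exact hXv.2.2 m hm y (hYX hy) hyb



/-! ### The main fusion -/

lemma galvin_pairs {Us : ℕ → Set EllPt} (hUo : ∀ n, IsOpen (Us n)) (hUd : ∀ n, Dense (Us n))
    (P : Finset (Finset ℕ × ℕ)) {A : Set ℕ} (hA : A.Infinite) :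
    ∃ B ⊆ A, B.Infinite ∧ ∀ p ∈ P, EB p.1 B ⊆ Us p.2 := by
  classical
  induction P using Finset.induction with
  | empty => exact ⟨A, subset_rfl, hA, by simp⟩
  | @insert p P hp ih =>
    obtain ⟨B1, hB1A, hB1inf, hB1⟩ := ih
    obtain ⟨B2, hB2sub, hB2inf, hB2⟩ := galvin (hUo p.2) (hUd p.2) p.1 hB1inf
    have hB2B1 : B2 ⊆ B1 := hB2sub.trans (abv_subset _ _)
    refine ⟨B2, hB2B1.trans hB1A, hB2inf, fun q hq => ?_⟩
    rcases Finset.mem_insert.1 hq with rfl | hq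
    · exact hB2
    · exact (EB_mono hB2B1).trans (hB1 q hq)

lemma main_fusion (Us : ℕ → Set EllPt) (hUo : ∀ n, IsOpen (Us n)) (hUd : ∀ n, Dense (Us n))
    (a : Finset ℕ) {A : Set ℕ} (hA : A.Infinite) :
    ∃ B, B ⊆ abv a A ∧ B.Infinite ∧ ∀ n, EB a B ⊆ Us n := by
  classical
  obtain ⟨A0, hA0sub, hA0inf, hA0⟩ := galvin (hUo 0) (hUd 0) a hA
  obtain ⟨f, hf0, hfR⟩ := depRec ((A0, (∅ : Finset ℕ)) : Set ℕ × Finset ℕ)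
    (fun k p q => Good p →
      (q.1 ⊆ p.1 ∧ Good q ∧ (∃ n ∈ p.1, q.2 = insert n p.2 ∧ ∀ x ∈ q.1, n < x) ∧
        ∀ s ⊆ q.2, ∀ j ≤ k + 1, EB (a ∪ s) q.1 ⊆ Us j))
    (fun k p => by
      by_cases hp : Good p
      · obtain ⟨hpinf, hplt⟩ := hp
        obtain ⟨n, hn⟩ := hpinf.nonempty
        have hA'' : ({x ∈ p.1 | n < x}).Infinite := by
          have hss : p.1 \ Iic n ⊆ {x ∈ p.1 | n < x} := by
            rintro x ⟨hx1, hx2⟩; exact ⟨hx1, by simpa using hx2⟩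
          exact (hpinf.diff (finite_Iic n)).mono hss
        obtain ⟨B, hBsub, hBinf, hB⟩ := galvin_pairs hUo hUd
          (((insert n p.2).powerset ×ˢ Finset.range (k + 2)).image (fun q => (a ∪ q.1, q.2)))
          hA''
        refine ⟨(B, insert n p.2), fun _ => ⟨fun x hx => (hBsub hx).1, ⟨hBinf, ?_⟩,
          ⟨n, hn, rfl, fun x hx => (hBsub hx).2⟩, fun s hs j hj => ?_⟩⟩
        · intro m hm x hx
          rcases Finset.mem_insert.1 hm with rfl | hm
          · exact (hBsub hx).2
          · exact hplt m hm x (hBsub hx).1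
        · refine hB (a ∪ s, j) (Finset.mem_image.2 ⟨(s, j), ?_, rfl⟩)
          refine Finset.mem_product.2 ⟨Finset.mem_powerset.2 hs, Finset.mem_range.2 (by omega)⟩
      · exact ⟨p, fun h => absurd h hp⟩)
  have hgood : ∀ k, Good (f k) := by
    intro k
    induction k with
    | zero => rw [hf0]; exact ⟨hA0inf, by simp⟩
    | succ k ih => exact (hfR k ih).2.1
  have hstep := fun k => hfR k (hgood k)
  have hmonoA : ∀ j k, j ≤ k → (f k).1 ⊆ (f j).1 := by
    intro j k hjk
    induction k with
    | zero => cases Nat.le_zero.1 hjk; exact subset_rfl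
    | succ k ih =>
      rcases Nat.lt_or_ge j (k+1) with h | h
      · exact (hstep k).1.trans (ih (Nat.lt_succ_iff.1 h))
      · cases le_antisymm hjk h; exact subset_rfl
  have hmonot : Monotone (fun k => (f k).2) := by
    apply monotone_nat_of_le_succ
    intro k
    obtain ⟨n, _, heq, _⟩ := (hstep k).2.2.1
    rw [heq]; exact Finset.subset_insert _ _
  have ht0 : (f 0).2 = ∅ := by rw [hf0]
  have hnotmem : ∀ k n, n ∈ (f k).1 → n ∉ (f k).2 := by
    intro k n hn hmem
    exact lt_irrefl n ((hgood k).2 n hmem n hn)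
  set D : Set ℕ := ⋃ j, (((f j).2 : Set ℕ)) with hD
  have hstage : ∀ j y, y ∈ (f j).2 →
      ∃ k, y ∈ (f (k+1)).2 ∧ y ∉ (f k).2 ∧ y ∈ (f k).1 := by
    intro j
    induction j with
    | zero => intro y hy; rw [ht0] at hy; exact absurd hy (Finset.notMem_empty y)
    | succ j ih =>
      intro y hy
      obtain ⟨n, hnA, heq, _⟩ := (hstep j).2.2.1
      rw [heq] at hy
      rcases Finset.mem_insert.1 hy with rfl | hy
      · exact ⟨j, by rw [heq]; exact Finset.mem_insert_self _ _, hnotmem j y hnA, hnA⟩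
      · exact ih y hy
  have hckey : ∀ k y, y ∈ D → y ∉ (f k).2 → y ∈ (f k).1 := by
    intro k y hyD hyk
    obtain ⟨j, hyj⟩ := mem_iUnion.1 hyD
    obtain ⟨k', h1, h2, h3⟩ := hstage j y hyj
    rcases Nat.lt_or_ge k' k with h | h
    · exact absurd (hmonot (Nat.succ_le_of_lt h) h1) hyk
    · exact hmonoA k k' h h3
  have hcard : ∀ k, k ≤ ((f k).2).card := by
    intro k
    induction k with
    | zero => exact Nat.zero_le _
    | succ k ih =>
      obtain ⟨n, hnA, heq, _⟩ := (hstep k).2.2.1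
      rw [heq, Finset.card_insert_of_notMem (hnotmem k n hnA)]
      omega
  have hDinf : D.Infinite := infinite_iUnion_finsets hcard
  have hDsub : D ⊆ A0 := by
    intro y hy
    have h := hckey 0 y hy (by rw [ht0]; exact Finset.notMem_empty y)
    rwa [hf0] at h
  -- stage invariant
  have hinv : ∀ k, ∀ s ⊆ (f k).2, ∀ j ≤ k, EB (a ∪ s) (f k).1 ⊆ Us j := by
    intro k
    induction k with
    | zero =>
      intro s hs j hj
      rw [hf0] at hs ⊢
      rw [Finset.subset_empty.1 hs, Finset.union_empty]
      cases Nat.le_zero.1 hj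
      exact hA0
    | succ k _ =>
      intro s hs j hj
      exact (hstep k).2.2.2 s hs j hj
  refine ⟨D, hDsub.trans hA0sub, hDinf, fun m => ?_⟩
  rintro X ⟨hX1, hX2, hX3⟩
  set s : Finset ℕ := (f m).2.filter (· ∈ X.1) with hs
  have hsX : ↑s ⊆ X.1 := fun x hx => (Finset.mem_filter.1 (Finset.mem_coe.1 hx)).2
  have hmem2 : ∀ y ∈ X.1, y ∉ (↑(a ∪ s) : Set ℕ) → y ∈ (f m).1 := by
    intro y hy hyas
    have hya : y ∉ (↑a : Set ℕ) := fun h => hyas (by rw [Finset.coe_union]; exact Or.inl h)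
    have hyD : y ∈ D := by
      rcases hX2 hy with h | h
      · exact absurd h hya
      · exact h
    refine hckey m y hyD (fun hymem => ?_)
    exact hyas (by
      rw [Finset.coe_union]
      exact Or.inr (Finset.mem_coe.2 (Finset.mem_filter.2 ⟨hymem, hy⟩)))
  have hXin : X ∈ EB (a ∪ s) (f m).1 := by
    refine ⟨?_, ?_, ?_⟩
    · rw [Finset.coe_union]
      exact union_subset hX1 hsX
    · intro y hy
      by_cases hyas : y ∈ (↑(a ∪ s) : Set ℕ)
      · exact Or.inl hyas
      · exact Or.inr (hmem2 y hy hyas)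
    · intro p hp y hy hyas
      have hyas' : y ∉ (↑(a ∪ s) : Set ℕ) := fun h => hyas (Finset.mem_coe.1 h)
      have hyA : y ∈ (f m).1 := hmem2 y hy hyas'
      rcases Finset.mem_union.1 hp with h | h
      · exact hX3 p h y hy (fun hya => hyas (Finset.mem_union_left _ hya))
      · exact (hgood m).2 p (Finset.mem_filter.1 h).1 y hyA
  exact hinv m s (Finset.filter_subset _ _) m le_rfl hXin

end Ell13

open Ell13

/-- In the Ellentuck space every meager set is nowhere dense; equivalently, the
nowhere dense (Ramsey null) sets form a σ-ideal: they are closed under subsets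
and countable unions. -/
theorem stmt13 :
    (∀ s : Set EllPt, IsMeagre s → IsNowhereDense s) ∧
      (∀ s t : Set EllPt, t ⊆ s → IsNowhereDense s → IsNowhereDense t) ∧
      ∀ f : ℕ → Set EllPt, (∀ n, IsNowhereDense (f n)) → IsNowhereDense (⋃ n, f n) := by
  classical
  have part1 : ∀ s : Set EllPt, IsMeagre s → IsNowhereDense s := by
    intro s hs
    obtain ⟨S, hSnwd, hScnt, hScov⟩ := isMeagre_iff_countable_union_isNowhereDense.1 hs
    obtain ⟨F, hFrange⟩ := (hScnt.insert ∅).exists_eq_range (insert_nonempty _ _)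
    have hFnwd : ∀ n, IsNowhereDense (F n) := by
      intro n
      have : F n ∈ insert (∅ : Set EllPt) S := hFrange ▸ mem_range_self n
      rcases this with h | h
      · rw [h]; exact isNowhereDense_empty
      · exact hSnwd _ h
    have hscov : s ⊆ ⋃ n, F n := by
      refine hScov.trans ?_
      intro x hx
      obtain ⟨T, hT, hxT⟩ := hx
      have : T ∈ range F := hFrange ▸ (mem_insert_iff.2 (Or.inr hT))
      obtain ⟨n, rfl⟩ := this
      exact mem_iUnion.2 ⟨n, hxT⟩
    rw [IsNowhereDense, eq_empty_iff_forall_notMem]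
    intro X hX
    obtain ⟨v, ⟨aa, Apt, rfl⟩, hXv, hvsub⟩ :=
      basis.exists_subset_of_mem_open hX isOpen_interior
    set Us : ℕ → Set EllPt := fun n => (closure (F n))ᶜ with hUs
    have hUo : ∀ n, IsOpen (Us n) := fun n => isClosed_closure.isOpen_compl
    have hUd : ∀ n, Dense (Us n) := fun n => interior_eq_empty_iff_dense_compl.1 (hFnwd n)
    obtain ⟨B, hBsub, hBinf, hBU⟩ := main_fusion Us hUo hUd aa Apt.2
    set Y : EllPt := ⟨↑aa ∪ B, hBinf.mono subset_union_right⟩ with hYdef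
    have hY1 : Y ∈ EB aa B := by
      refine ⟨subset_union_left, subset_rfl, fun m hm y hy hya => ?_⟩
      rcases hy with h | h
      · exact absurd (Finset.mem_coe.1 h) hya
      · exact (hBsub h).2 m hm
    have hY2 : Y ∈ EBasic aa Apt := by
      refine ⟨subset_union_left,
        union_subset_union_right _ (hBsub.trans (abv_subset _ _)), fun m hm y hy hya => ?_⟩
      rcases hy with h | h
      · exact absurd (Finset.mem_coe.1 h) hya
      · exact (hBsub h).2 m hm
    have hYcl : Y ∈ closure s := interior_subset (hvsub hY2)
    have hsub2 : s ⊆ (EB aa B)ᶜ := by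
      intro Z hZ hZB
      obtain ⟨n, hZn⟩ := mem_iUnion.1 (hscov hZ)
      exact (hBU n hZB) (subset_closure hZn)
    exact (closure_minimal hsub2 (EB_isOpen aa hBinf).isClosed_compl hYcl) hY1
  refine ⟨part1, ?_, ?_⟩
  · intro s t hts hs
    exact eq_empty_of_subset_empty (hs ▸ interior_mono (closure_mono hts))
  · intro f hf
    refine part1 _ (isMeagre_iUnion (fun n => ?_))
    exact isMeagre_iff_countable_union_isNowhereDense.2
      ⟨{f n}, by simp [hf n], countable_singleton _, by simp⟩
end

section
/- Louveau–Simpson theorem: if ℱ is a point-finite family of Ramsey null subsets of [ω]^ω such that the union of every subfamily of ℱ is completely Ramsey, then ⋃ℱ is Ramsey null. -/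
open Set Topology

/-- `X` is Ramsey null: for every basic set `[a, A]` there is `B ∈ [A]^ω` with
`[a, B] ∩ X = ∅`. -/
def RamseyNull (X : Set EllPt) : Prop :=
  ∀ (a : Finset ℕ) (A : EllPt), ∃ B : EllPt, B.1 ⊆ A.1 ∧ EBasic a B ∩ X = ∅

/-- `X` is completely Ramsey: for every basic set `[a, A]` there is `B ∈ [A]^ω`
with `[a, B] ⊆ X` or `[a, B] ∩ X = ∅`. -/
def CompletelyRamsey (X : Set EllPt) : Prop :=
  ∀ (a : Finset ℕ) (A : EllPt), ∃ B : EllPt, B.1 ⊆ A.1 ∧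
    (EBasic a B ⊆ X ∨ EBasic a B ∩ X = ∅)

namespace LS

/-! ### Nodes -/

/-- A node of the Ellentuck tree: a basic set `[b, C]` with `C` infinite and all
elements of `C` above all elements of `b`. -/
structure Node where
  b : Finset ℕ
  C : Set ℕ
  hC : C.Infinite
  hgt : ∀ c ∈ C, ∀ m ∈ b, m < c

namespace Node

/-- The set of points of a node. -/
def pts (p : Node) : Set EllPt := EBasic p.b ⟨p.C, p.hC⟩

/-- `q.le p` : the node `q` lies below `p`. -/
def le (q p : Node) : Prop := p.b ⊆ q.b ∧ ↑q.b ⊆ ↑p.b ∪ p.C ∧ q.C ⊆ p.C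

lemma le_refl (p : Node) : p.le p :=
  ⟨subset_rfl, subset_union_left, subset_rfl⟩

lemma le_trans {r q p : Node} (h1 : r.le q) (h2 : q.le p) : r.le p := by
  refine ⟨h2.1.trans h1.1, ?_, h1.2.2.trans h2.2.2⟩
  refine h1.2.1.trans ?_
  refine union_subset (h2.2.1.trans ?_) ?_
  · exact union_subset_union_right _ subset_rfl
  · exact h2.2.2.trans subset_union_right

lemma pts_mono {q p : Node} (h : q.le p) : q.pts ⊆ p.pts := by
  rintro x ⟨h1, h2, h3⟩
  refine ⟨(Finset.coe_subset.2 h.1).trans h1, ?_, ?_⟩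
  · intro n hn
    rcases h2 hn with hb | hc
    · rcases h.2.1 hb with hb' | hc'
      · exact Or.inl hb'
      · exact Or.inr hc'
    · exact Or.inr (h.2.2 hc)
  · intro m hm n hn hnb
    by_cases hnb' : n ∈ q.b
    · rcases h.2.1 hnb' with h' | h'
      · exact absurd h' hnb
      · exact p.hgt n h' m hm
    · exact h3 m (h.1 hm) n hn hnb'

/-- The canonical point of a node. -/
def selfPt (q : Node) : EllPt := ⟨↑q.b ∪ q.C, (q.hC.mono subset_union_right).mono subset_rfl⟩

lemma selfPt_mem (q : Node) : q.selfPt ∈ q.pts := by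
  refine ⟨subset_union_left, subset_rfl, ?_⟩
  intro m hm n hn hnb
  rcases hn with hb | hc
  · exact absurd hb hnb
  · exact q.hgt n hc m hm

lemma pts_nonempty (q : Node) : q.pts.Nonempty := ⟨q.selfPt, q.selfPt_mem⟩

end Node

/-- `EBasic` is monotone in the content. -/
lemma EBasic_mono {b : Finset ℕ} {A A' : EllPt} (h : A'.1 ⊆ A.1) :
    EBasic b A' ⊆ EBasic b A := by
  rintro x ⟨h1, h2, h3⟩
  exact ⟨h1, h2.trans (union_subset_union_right _ h), h3⟩

/-- Trimming a set above a finite set. -/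
def trim (b : Finset ℕ) (C : Set ℕ) : Set ℕ := C \ ⋃ m ∈ b, Set.Iic m

lemma trim_subset (b : Finset ℕ) (C : Set ℕ) : trim b C ⊆ C := diff_subset

lemma trim_infinite (b : Finset ℕ) {C : Set ℕ} (h : C.Infinite) : (trim b C).Infinite := by
  apply h.diff
  exact Set.Finite.biUnion b.finite_toSet (fun m _ => Set.finite_Iic m)

lemma trim_gt {b : Finset ℕ} {C : Set ℕ} {c : ℕ} (hc : c ∈ trim b C) {m : ℕ} (hm : m ∈ b) :
    m < c := by
  rcases hc with ⟨_, h2⟩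
  by_contra hlt
  exact h2 (Set.mem_biUnion hm (Set.mem_Iic.2 (le_of_not_gt hlt)))

/-- Build a node on base `b` with content (a trimming of) `C`. -/
noncomputable def Node.mk' (b : Finset ℕ) (C : Set ℕ) (h : C.Infinite) : Node :=
  ⟨b, trim b C, trim_infinite b h, fun c hc m hm => trim_gt hc hm⟩

@[simp] lemma Node.mk'_b (b : Finset ℕ) (C : Set ℕ) (h : C.Infinite) : (Node.mk' b C h).b = b := rfl

lemma Node.mk'_C (b : Finset ℕ) (C : Set ℕ) (h : C.Infinite) : (Node.mk' b C h).C ⊆ C :=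
  trim_subset b C

lemma Node.mk'_pts (b : Finset ℕ) (C : Set ℕ) (h : C.Infinite) :
    (Node.mk' b C h).pts = EBasic b ⟨C, h⟩ := by
  apply Set.Subset.antisymm
  · exact EBasic_mono (trim_subset b C)
  · rintro x ⟨h1, h2, h3⟩
    refine ⟨h1, ?_, h3⟩
    intro n hn
    rcases h2 hn with hb | hc
    · exact Or.inl hb
    · by_cases hnb : n ∈ b
      · exact Or.inl hnb
      · refine Or.inr ⟨hc, ?_⟩
        intro hmem
        rcases Set.mem_iUnion₂.1 hmem with ⟨m, hm, hle⟩
        exact absurd (h3 m hm n hn hnb) (not_lt.2 hle)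

lemma Node.mk'_le {q : Node} {C : Set ℕ} {h : C.Infinite} (hsub : C ⊆ q.C) :
    (Node.mk' q.b C h).le q := by
  refine ⟨?_, ?_, ?_⟩
  · exact subset_rfl
  · exact subset_union_left
  · exact (Node.mk'_C q.b C h).trans hsub

/-! ### Subunions, dead and alive index sets -/

variable {ι : Type}

/-- The union of the subfamily indexed by `W`. -/
def NU (F : ι → Set EllPt) (W : Set ι) : Set EllPt := ⋃ i ∈ W, F i

lemma mem_NU {F : ι → Set EllPt} {W : Set ι} {x : EllPt} :
    x ∈ NU F W ↔ ∃ i ∈ W, x ∈ F i := by simp [NU]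

lemma NU_mono {F : ι → Set EllPt} {W W' : Set ι} (h : W' ⊆ W) : NU F W' ⊆ NU F W := by
  intro x hx
  rcases mem_NU.1 hx with ⟨i, hi, hxi⟩
  exact mem_NU.2 ⟨i, h hi, hxi⟩

lemma NU_union {F : ι → Set EllPt} (W W' : Set ι) :
    NU F (W ∪ W') = NU F W ∪ NU F W' := by
  ext x; simp [mem_NU, or_and_right, exists_or]

lemma NU_iUnion {F : ι → Set EllPt} {α : Type*} (V : α → Set ι) :
    NU F (⋃ n, V n) = ⋃ n, NU F (V n) := by
  ext x; simp [mem_NU]; tauto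

lemma NU_empty (F : ι → Set EllPt) : NU F (∅ : Set ι) = ∅ := by simp [NU]

lemma NU_singleton (F : ι → Set EllPt) (i : ι) : NU F ({i} : Set ι) = F i := by simp [NU]

/-- `W` is dead below `p`: the union `NU F W` can be avoided below every node below `p`. -/
def dead (F : ι → Set EllPt) (W : Set ι) (p : Node) : Prop :=
  ∀ q : Node, q.le p → ∃ (C' : Set ℕ) (h' : C'.Infinite),
    C' ⊆ q.C ∧ EBasic q.b ⟨C', h'⟩ ∩ NU F W = ∅

/-- `W` is alive below `p`: some node below `p` is contained in `NU F W`. -/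
def alive (F : ι → Set EllPt) (W : Set ι) (p : Node) : Prop :=
  ∃ q : Node, q.le p ∧ q.pts ⊆ NU F W

lemma dead_mono {F : ι → Set EllPt} {W W' : Set ι} {p : Node} (h : W' ⊆ W)
    (hd : dead F W p) : dead F W' p := by
  intro q hq
  obtain ⟨C', h', hsub, hkill⟩ := hd q hq
  refine ⟨C', h', hsub, ?_⟩
  apply Set.eq_empty_of_subset_empty
  rw [← hkill]
  exact Set.inter_subset_inter_right _ (NU_mono h)

lemma dead_le {F : ι → Set EllPt} {W : Set ι} {p q : Node} (h : q.le p)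
    (hd : dead F W p) : dead F W q :=
  fun r hr => hd r (Node.le_trans hr h)

lemma dead_empty (F : ι → Set EllPt) (p : Node) : dead F (∅ : Set ι) p := by
  intro q hq
  exact ⟨q.C, q.hC, subset_rfl, by simp [NU_empty]⟩

lemma dead_union {F : ι → Set EllPt} {W W' : Set ι} {p : Node}
    (h : dead F W p) (h' : dead F W' p) : dead F (W ∪ W') p := by
  intro q hq
  obtain ⟨C1, hC1, hsub1, hkill1⟩ := h q hq
  set q1 : Node := Node.mk' q.b C1 hC1 with hq1
  have hq1le : q1.le q := Node.mk'_le hsub1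
  obtain ⟨C2, hC2, hsub2, hkill2⟩ := h' q1 (Node.le_trans hq1le hq)
  have hsub2' : C2 ⊆ C1 := hsub2.trans (Node.mk'_C q.b C1 hC1)
  refine ⟨C2, hC2, hsub2'.trans hsub1, ?_⟩
  · have e1 : EBasic q.b ⟨C2, hC2⟩ ∩ NU F W = ∅ := by
      apply Set.eq_empty_of_subset_empty
      rw [← hkill1]
      exact Set.inter_subset_inter_left _ (EBasic_mono hsub2')
    have e2 : EBasic q.b ⟨C2, hC2⟩ ∩ NU F W' = ∅ := by
      apply Set.eq_empty_of_subset_empty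
      rw [← hkill2]
      have : EBasic q.b ⟨C2, hC2⟩ ⊆ EBasic q1.b ⟨C2, hC2⟩ := subset_rfl
      exact Set.inter_subset_inter_left _ this
    rw [NU_union, Set.inter_union_distrib_left, e1, e2, Set.union_empty]

lemma not_alive_of_dead {F : ι → Set EllPt} {W : Set ι} {p : Node}
    (hd : dead F W p) (ha : alive F W p) : False := by
  obtain ⟨q, hq, hsolid⟩ := ha
  obtain ⟨C', h', hsub, hkill⟩ := hd q hq
  set r : Node := Node.mk' q.b C' h' with hr
  have hrle : r.le q := ⟨subset_rfl, subset_union_left, (Node.mk'_C _ _ _).trans hsub⟩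
  obtain ⟨x, hx⟩ := r.pts_nonempty
  have hx' : x ∈ EBasic q.b ⟨C', h'⟩ := by rwa [← Node.mk'_pts q.b C' h']
  have : x ∈ NU F W := hsolid (Node.pts_mono hrle hx)
  exact Set.eq_empty_iff_forall_notMem.1 hkill x ⟨hx', this⟩

/-- The key dichotomy, from complete Ramseyness of subunions. -/
lemma dead_or_alive {F : ι → Set EllPt}
    (hcr : ∀ I : Set ι, CompletelyRamsey (⋃ i ∈ I, F i)) (W : Set ι) (p : Node) :
    dead F W p ∨ alive F W p := by
  by_cases hd : dead F W p
  · exact Or.inl hd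
  · right
    rw [dead] at hd
    push_neg at hd
    obtain ⟨q, hq, hnokill⟩ := hd
    obtain ⟨B, hB1, hB2⟩ := hcr W q.b ⟨q.C, q.hC⟩
    have hB1' : B.1 ⊆ q.C := hB1
    rcases hB2 with hsolid | hkill
    · refine ⟨Node.mk' q.b B.1 B.2, Node.le_trans (Node.mk'_le hB1') hq, ?_⟩
      rw [Node.mk'_pts]
      exact hsolid
    · exfalso
      have hkill' : EBasic q.b B ∩ NU F W = ∅ := hkill
      have hne := hnokill B.1 B.2 hB1'
      rw [show (⟨B.1, B.2⟩ : EllPt) = B from rfl, hkill'] at hne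
      exact Set.not_nonempty_empty hne

/-! ### The fusion lemma: dead index sets form a countably closed ideal -/

section Fusion

variable {F : ι → Set EllPt} {V : ℕ → Set ι} {p : Node}

private lemma foldkill (h : ∀ n, dead F (V n) p) (q : Node) (hq : q.le p)
    (P : Finset (ℕ × Finset ℕ)) (hP : ∀ pr ∈ P, ↑pr.2 ⊆ q.C) :
    ∀ (C : Set ℕ) (hC : C.Infinite), C ⊆ q.C →
    ∃ (C' : Set ℕ) (h' : C'.Infinite), C' ⊆ C ∧
      ∀ pr ∈ P, EBasic (q.b ∪ pr.2) ⟨C', h'⟩ ∩ NU F (V pr.1) = ∅ := by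
  classical
  induction P using Finset.induction_on with
  | empty =>
    intro C hC hsub
    exact ⟨C, hC, subset_rfl, by simp⟩
  | @insert pr P' hprP' ih =>
    intro C hC hsub
    obtain ⟨C1, hC1, hsub1, hkill1⟩ := ih (fun pr h' => hP pr (Finset.mem_insert_of_mem h')) C hC hsub
    have he : ↑pr.2 ⊆ q.C := hP pr (Finset.mem_insert_self _ _)
    -- build the node with base q.b ∪ pr.2 and content (trim of) C1
    set u : Node := Node.mk' (q.b ∪ pr.2) C1 hC1 with hu
    have hule : u.le p := by
      refine ⟨?_, ?_, ?_⟩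
      · exact hq.1.trans Finset.subset_union_left
      · rw [hu, Node.mk'_b, Finset.coe_union]
        refine union_subset hq.2.1 ?_
        exact (he.trans hq.2.2).trans subset_union_right
      · exact ((Node.mk'_C _ _ _).trans (hsub1.trans hsub)).trans hq.2.2
    obtain ⟨C2, hC2, hsub2, hkill2⟩ := h pr.1 u hule
    have hsub2' : C2 ⊆ C1 := hsub2.trans (Node.mk'_C _ _ _)
    refine ⟨C2, hC2, hsub2'.trans hsub1, ?_⟩
    intro pr' hpr'
    rcases Finset.mem_insert.1 hpr' with rfl | hmem
    · exact hkill2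
    · apply Set.eq_empty_of_subset_empty
      rw [← hkill1 pr' hmem]
      exact Set.inter_subset_inter_left _ (EBasic_mono hsub2')

/-- Fusion states. -/
private structure FS (q : Node) where
  ns : Finset ℕ
  C : Set ℕ
  inf : C.Infinite
  subq : C ⊆ q.C
  nsq : ↑ns ⊆ q.C
  sep : ∀ c ∈ C, ∀ m ∈ ns, m < c

private lemma FSstep (h : ∀ n, dead F (V n) p) (q : Node) (hq : q.le p) (k : ℕ) (s : FS q) :
    ∃ (t : FS q) (n : ℕ), n ∈ s.C ∧ t.ns = insert n s.ns ∧ t.C ⊆ s.C ∧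
      ∀ j ≤ k, ∀ e ∈ t.ns.powerset, EBasic (q.b ∪ e) ⟨t.C, t.inf⟩ ∩ NU F (V j) = ∅ := by
  classical
  obtain ⟨n, hn⟩ := s.inf.nonempty
  have hC0 : (s.C \ Set.Iic n).Infinite := s.inf.diff (Set.finite_Iic n)
  have hC0sub : s.C \ Set.Iic n ⊆ q.C := diff_subset.trans s.subq
  set P : Finset (ℕ × Finset ℕ) := (Finset.range (k+1)) ×ˢ (insert n s.ns).powerset with hP
  have hPmem : ∀ pr ∈ P, ↑pr.2 ⊆ q.C := by
    intro pr hpr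
    have h2 : pr.2 ⊆ insert n s.ns := Finset.mem_powerset.1 (Finset.mem_product.1 hpr).2
    refine (Finset.coe_subset.2 h2).trans ?_
    rw [Finset.coe_insert]
    exact insert_subset (s.subq hn) s.nsq
  obtain ⟨C', h', hsub', hkill⟩ := foldkill h q hq P hPmem (s.C \ Set.Iic n) hC0 hC0sub
  have hsep : ∀ c ∈ C', ∀ m ∈ insert n s.ns, m < c := by
    intro c hc m hm
    rcases Finset.mem_insert.1 hm with rfl | hm'
    · exact lt_of_not_ge fun hle => (hsub' hc).2 (Set.mem_Iic.2 hle)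
    · exact s.sep c ((hsub' hc).1) m hm'
  refine ⟨⟨insert n s.ns, C', h', (hsub'.trans diff_subset).trans s.subq,
    by rw [Finset.coe_insert]; exact insert_subset (s.subq hn) s.nsq, hsep⟩, n, hn, rfl,
    hsub'.trans diff_subset, ?_⟩
  intro j hj e he
  exact hkill (j, e) (Finset.mem_product.2 ⟨Finset.mem_range.2 (Nat.lt_succ_of_le hj), he⟩)

/-- The σ-ideal property of dead sets: fusion. -/
lemma dead_iUnion {F : ι → Set EllPt} {V : ℕ → Set ι} {p : Node}
    (h : ∀ n, dead F (V n) p) : dead F (⋃ n, V n) p := by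
  classical
  intro q hq
  -- the recursively constructed fusion sequence
  let init : FS q := ⟨∅, q.C, q.hC, subset_rfl, by simp, by simp⟩
  let step : ∀ (k : ℕ) (s : FS q), FS q := fun k s => (FSstep h q hq k s).choose
  let St : ℕ → FS q := fun k => Nat.rec init (fun k s => step k s) k
  have hSt0 : St 0 = init := rfl
  have hStsucc : ∀ k, St (k+1) = step k (St k) := fun k => rfl
  let nseq : ℕ → ℕ := fun k => (FSstep h q hq k (St k)).choose_spec.choose
  have hspec : ∀ k, nseq k ∈ (St k).C ∧ (St (k+1)).ns = insert (nseq k) (St k).ns ∧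
      (St (k+1)).C ⊆ (St k).C ∧
      ∀ j ≤ k, ∀ e ∈ (St (k+1)).ns.powerset,
        EBasic (q.b ∪ e) ⟨(St (k+1)).C, (St (k+1)).inf⟩ ∩ NU F (V j) = ∅ := by
    intro k
    exact (FSstep h q hq k (St k)).choose_spec.choose_spec
  -- monotonicity
  have hmono' : ∀ (d k : ℕ), (St (k+d)).C ⊆ (St k).C := by
    intro d
    induction d with
    | zero => intro k; exact subset_rfl
    | succ d ih => intro k; exact ((hspec (k+d)).2.2.1).trans (ih k)
  have hmono : ∀ {k m : ℕ}, k ≤ m → (St m).C ⊆ (St k).C := by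
    intro k m hkm
    obtain ⟨d, rfl⟩ := Nat.exists_eq_add_of_le hkm
    exact hmono' d k
  have hns : ∀ k, (St k).ns = (Finset.range k).image nseq := by
    intro k
    induction k with
    | zero => simp [hSt0, init]
    | succ k ih =>
      rw [(hspec k).2.1, ih, Finset.range_add_one, Finset.image_insert]
  -- the diagonal set
  have hnseqC : ∀ k, nseq k ∈ (St k).C := fun k => (hspec k).1
  have hsmono : StrictMono nseq := by
    apply strictMono_nat_of_lt_succ
    intro k
    have h1 : nseq (k+1) ∈ (St (k+1)).C := hnseqC (k+1)
    have h2 : nseq k ∈ (St (k+1)).ns := by rw [(hspec k).2.1]; exact Finset.mem_insert_self _ _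
    exact (St (k+1)).sep _ h1 _ h2
  set D : Set ℕ := Set.range nseq with hD
  have hDinf : D.Infinite := Set.infinite_range_of_injective hsmono.injective
  have hDsub : D ⊆ q.C := by
    rintro _ ⟨k, rfl⟩
    exact (St k).subq (hnseqC k)
  refine ⟨D, hDinf, hDsub, ?_⟩
  -- the final kill
  apply Set.eq_empty_iff_forall_notMem.2
  rintro x ⟨hx, hxN⟩
  rw [show NU F (⋃ n, V n) = ⋃ n, NU F (V n) from NU_iUnion V] at hxN
  obtain ⟨j, hj⟩ := Set.mem_iUnion.1 hxN
  set K := j + 1 with hK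
  set e : Finset ℕ := (St K).ns.filter (fun n => n ∈ x.1) with he
  have hesub : e ⊆ (St K).ns := Finset.filter_subset _ _
  have hex : ↑e ⊆ x.1 := by
    intro n hn
    exact (Finset.mem_filter.1 hn).2
  -- membership analysis for elements of x
  have hxmem : ∀ n ∈ x.1, n ∈ (↑(q.b ∪ e) : Set ℕ) ∪ (St K).C := by
    intro n hn
    rcases hx.2.1 hn with hb | hd
    · rw [Finset.coe_union]
      exact Or.inl (Or.inl hb)
    · obtain ⟨m, rfl⟩ := hd
      rcases lt_or_ge m K with hm | hm
      · have : nseq m ∈ (St K).ns := by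
          rw [hns K]
          exact Finset.mem_image_of_mem _ (Finset.mem_range.2 hm)
        left
        rw [Finset.coe_union]
        right
        exact Finset.mem_coe.2 (Finset.mem_filter.2 ⟨this, hn⟩)
      · right
        exact hmono hm (hnseqC m)
  have hxin : x ∈ EBasic (q.b ∪ e) ⟨(St K).C, (St K).inf⟩ := by
    refine ⟨?_, ?_, ?_⟩
    · rw [Finset.coe_union]
      exact union_subset hx.1 hex
    · intro n hn
      exact hxmem n hn
    · intro m hm n hn hnmem
      have hnC : n ∈ (St K).C := by
        rcases hxmem n hn with hmem | hC
        · exact absurd (Finset.mem_coe.1 hmem) hnmem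
        · exact hC
      rcases Finset.mem_union.1 hm with hmb | hme
      · exact q.hgt n ((St K).subq hnC) m hmb
      · exact (St K).sep n hnC m (hesub hme)
  have hkill := (hspec j).2.2.2 j le_rfl e (Finset.mem_powerset.2 hesub)
  exact Set.eq_empty_iff_forall_notMem.1 hkill x ⟨hxin, hj⟩

end Fusion

/-! ### Point-finite disjoint families -/

section Main

variable {J : Type}

/-- Union of a subfamily of index sets. -/
def MU (W : J → Set ι) (E : Set J) : Set ι := ⋃ j ∈ E, W j

lemma MU_mono {W : J → Set ι} {E E' : Set J} (h : E' ⊆ E) : MU W E' ⊆ MU W E :=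
  Set.biUnion_subset_biUnion_left h

lemma MU_union {W : J → Set ι} (E E' : Set J) : MU W (E ∪ E') = MU W E ∪ MU W E' :=
  Set.biUnion_union E E' W

lemma MU_iUnion {W : J → Set ι} {α : Type*} (G : α → Set J) :
    MU W (⋃ n, G n) = ⋃ n, MU W (G n) := by
  ext i; simp [MU]; tauto

lemma MU_empty (W : J → Set ι) : MU W (∅ : Set J) = ∅ := by simp [MU]

lemma MU_singleton (W : J → Set ι) (j : J) : MU W ({j} : Set J) = W j := by simp [MU]

lemma MU_univ (W : J → Set ι) : MU W (Set.univ : Set J) = ⋃ j, W j := by simp [MU]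

/-- The (finite) set of indices `j` whose set `W j` covers `x`. -/
def DD (F : ι → Set EllPt) (W : J → Set ι) (x : EllPt) : Set J :=
  {j | ∃ i ∈ W j, x ∈ F i}

lemma mem_NU_MU {F : ι → Set EllPt} {W : J → Set ι} {E : Set J} {x : EllPt} :
    x ∈ NU F (MU W E) ↔ (DD F W x ∩ E).Nonempty := by
  constructor
  · intro hx
    rcases mem_NU.1 hx with ⟨i, hi, hxi⟩
    rcases Set.mem_iUnion₂.1 hi with ⟨j, hj, hij⟩
    exact ⟨j, ⟨i, hij, hxi⟩, hj⟩
  · rintro ⟨j, ⟨i, hij, hxi⟩, hj⟩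
    exact mem_NU.2 ⟨i, Set.mem_iUnion₂.2 ⟨j, hj, hij⟩, hxi⟩

lemma DD_finite {F : ι → Set EllPt} {W : J → Set ι}
    (hpf : ∀ x : EllPt, {i | x ∈ F i}.Finite)
    (hdisj : ∀ j j' : J, j ≠ j' → Disjoint (W j) (W j')) (x : EllPt) :
    (DD F W x).Finite := by
  have hsub : DD F W x ⊆ ⋃ i ∈ {i | x ∈ F i}, {j | i ∈ W j} := by
    rintro j ⟨i, hij, hxi⟩
    exact Set.mem_iUnion₂.2 ⟨i, hxi, hij⟩
  refine Set.Finite.subset (Set.Finite.biUnion (hpf x) ?_) hsub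
  intro i _
  apply Set.Subsingleton.finite
  intro j hj j' hj'
  by_contra hne
  exact Set.disjoint_left.1 (hdisj j j' hne) hj hj'

/-! ### Case I : a σ-complete ultrafilter contradiction -/

lemma caseI_contra {F : ι → Set EllPt} {W : J → Set ι} {p : Node}
    (hcr : ∀ I : Set ι, CompletelyRamsey (⋃ i ∈ I, F i))
    (hdead : ∀ j, dead F (W j) p)
    (hJc : Cardinal.mk J ≤ Cardinal.continuum)
    (r : Node) (E : Set J) (hrle : r.le p) (hsolid : r.pts ⊆ NU F (MU W E))
    (hdich : ∀ E' : Set J, E' ⊆ E → dead F (MU W E') r ∨ dead F (MU W (E \ E')) r) :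
    False := by
  classical
  have haliveE : alive F (MU W E) r := ⟨r, Node.le_refl r, hsolid⟩
  -- an injection of E into ℕ → Bool
  have hEc : Cardinal.mk ↥E ≤ Cardinal.mk (ℕ → Bool) := by
    refine le_trans ((Cardinal.mk_subtype_le E).trans hJc) ?_
    rw [← Cardinal.power_def, Cardinal.mk_bool, Cardinal.mk_nat]
    exact le_of_eq Cardinal.two_power_aleph0.symm
  obtain ⟨g⟩ := hEc
  -- choose at each coordinate a non-dead half
  have hbit : ∀ n : ℕ, ∃ bb : Bool, ¬ dead F (MU W (Subtype.val '' {η : ↥E | g η n = bb})) r := by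
    intro n
    by_contra hcon
    push_neg at hcon
    have hun : (Subtype.val '' {η : ↥E | g η n = true}) ∪
        (Subtype.val '' {η : ↥E | g η n = false}) = E := by
      apply Set.Subset.antisymm
      · rintro j (⟨η, _, rfl⟩ | ⟨η, _, rfl⟩) <;> exact η.2
      · intro j hj
        rcases Bool.eq_false_or_eq_true (g ⟨j, hj⟩ n) with hb | hb
        · exact Or.inl ⟨⟨j, hj⟩, hb, rfl⟩
        · exact Or.inr ⟨⟨j, hj⟩, hb, rfl⟩
    have := dead_union (hcon true) (hcon false)
    rw [← MU_union, hun] at this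
    exact not_alive_of_dead this haliveE
  set A : ℕ → Set J := fun n => Subtype.val '' {η : ↥E | g η n = (hbit n).choose} with hA
  have hAE : ∀ n, A n ⊆ E := by
    rintro n j ⟨η, _, rfl⟩; exact η.2
  have hAdead : ∀ n, dead F (MU W (E \ A n)) r := by
    intro n
    rcases hdich (A n) (hAE n) with hd | hd
    · exact absurd hd (hbit n).choose_spec
    · exact hd
  -- the intersection of the A n is a subsingleton
  have hsing : (⋂ n, A n).Subsingleton := by
    intro j hj j' hj'
    have h1 : ∀ n, g ⟨j, (hAE 0) (Set.mem_iInter.1 hj 0)⟩ n = (hbit n).choose := by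
      intro n
      rcases Set.mem_iInter.1 hj n with ⟨η, hη, hval⟩
      have : η = ⟨j, (hAE 0) (Set.mem_iInter.1 hj 0)⟩ := Subtype.ext hval
      rwa [this] at hη
    have h2 : ∀ n, g ⟨j', (hAE 0) (Set.mem_iInter.1 hj' 0)⟩ n = (hbit n).choose := by
      intro n
      rcases Set.mem_iInter.1 hj' n with ⟨η, hη, hval⟩
      have : η = ⟨j', (hAE 0) (Set.mem_iInter.1 hj' 0)⟩ := Subtype.ext hval
      rwa [this] at hη
    have : (⟨j, (hAE 0) (Set.mem_iInter.1 hj 0)⟩ : ↥E) = ⟨j', (hAE 0) (Set.mem_iInter.1 hj' 0)⟩ := by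
      apply g.injective
      funext n
      rw [h1 n, h2 n]
    exact congrArg Subtype.val this
  -- deadness of the intersection part
  have hsingdead : dead F (MU W (⋂ n, A n)) r := by
    rcases Set.Subsingleton.eq_empty_or_singleton hsing with he | ⟨j, hj⟩
    · rw [he, MU_empty]
      exact dead_empty F r
    · rw [hj, MU_singleton]
      exact dead_le hrle (hdead j)
  -- deadness of the rest
  have hrest : dead F (MU W (⋃ n, E \ A n)) r := by
    rw [MU_iUnion]
    exact dead_iUnion (fun n => hAdead n)
  have hEeq : E = (⋃ n, E \ A n) ∪ (⋂ n, A n) := by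
    apply Set.Subset.antisymm
    · intro j hj
      by_cases hmem : j ∈ ⋂ n, A n
      · exact Or.inr hmem
      · left
        rw [Set.mem_iInter] at hmem
        push_neg at hmem
        rcases hmem with ⟨n, hn⟩
        exact Set.mem_iUnion.2 ⟨n, hj, hn⟩
    · rintro j (hj | hj)
      · rcases Set.mem_iUnion.1 hj with ⟨n, hn⟩
        exact hn.1
      · exact hAE 0 (Set.mem_iInter.1 hj 0)
  have : dead F (MU W E) r := by
    rw [hEeq, MU_union]
    exact dead_union hrest hsingdead
  exact not_alive_of_dead this haliveE

end Main

/-! ### Case II : a binary tree of splittings -/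

lemma extend_base (u : Node) : ∃ u' : Node, u'.le u ∧ u.b ⊂ u'.b ∧ u'.pts ⊆ u.pts := by
  obtain ⟨n, hn⟩ := u.hC.nonempty
  have hinf : (u.C \ Set.Iic n).Infinite := u.hC.diff (Set.finite_Iic n)
  have hgt' : ∀ c ∈ u.C \ Set.Iic n, ∀ m ∈ insert n u.b, m < c := by
    intro c hc m hm
    rcases Finset.mem_insert.1 hm with rfl | hm'
    · exact lt_of_not_ge fun hle => hc.2 (Set.mem_Iic.2 hle)
    · exact u.hgt c hc.1 m hm'
  set u' : Node := ⟨insert n u.b, u.C \ Set.Iic n, hinf, hgt'⟩ with hu'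
  have hnb : n ∉ u.b := fun hmem => lt_irrefl n (u.hgt n hn n hmem)
  have hle : u'.le u := by
    refine ⟨Finset.subset_insert _ _, ?_, diff_subset⟩
    rw [hu']
    rw [Finset.coe_insert]
    exact insert_subset (Or.inr hn) subset_union_left
  exact ⟨u', hle, Finset.ssubset_insert hnb, Node.pts_mono hle⟩

lemma node_le_antitone {g : ℕ → Node} (hch : ∀ k, (g (k+1)).le (g k)) :
    ∀ {k m : ℕ}, k ≤ m → (g m).le (g k) := by
  have h' : ∀ (d k : ℕ), (g (k + d)).le (g k) := by
    intro d
    induction d with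
    | zero => intro k; exact Node.le_refl _
    | succ d ih => intro k; exact Node.le_trans (hch (k + d)) (ih k)
  intro k m hkm
  obtain ⟨d, rfl⟩ := Nat.exists_eq_add_of_le hkm
  exact h' d k

lemma chain_point (g : ℕ → Node) (hch : ∀ k, (g (k+1)).le (g k))
    (hstr : ∀ k, (g k).b ⊂ (g (k+1)).b) : ∃ x : EllPt, ∀ k, x ∈ (g k).pts := by
  have hle : ∀ {k m : ℕ}, k ≤ m → (g m).le (g k) := node_le_antitone hch
  have hcard : ∀ k, k ≤ (g k).b.card := by
    intro k
    induction k with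
    | zero => exact Nat.zero_le _
    | succ k ih => exact Nat.succ_le_of_lt (lt_of_le_of_lt ih (Finset.card_lt_card (hstr k)))
  set X : Set ℕ := ⋃ k, ↑(g k).b with hX
  have hXinf : X.Infinite := by
    by_contra hfin
    rw [Set.not_infinite] at hfin
    have hbnd : ∀ k, (g k).b.card ≤ hfin.toFinset.card := by
      intro k
      apply Finset.card_le_card
      intro n hn
      rw [Set.Finite.mem_toFinset]
      exact Set.mem_iUnion.2 ⟨k, hn⟩
    exact Nat.not_succ_le_self _ (le_trans (hcard (hfin.toFinset.card + 1)) (hbnd _))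
  have hmem2 : ∀ k, X ⊆ ↑(g k).b ∪ (g k).C := by
    intro k n hn
    rcases Set.mem_iUnion.1 hn with ⟨m, hm⟩
    rcases le_total m k with h | h
    · exact Or.inl ((hle h).1 hm)
    · exact (hle h).2.1 hm
  refine ⟨⟨X, hXinf⟩, ?_⟩
  intro k
  refine ⟨?_, hmem2 k, ?_⟩
  · intro n hn
    exact Set.mem_iUnion.2 ⟨k, hn⟩
  · intro m hm n hn hnb
    have hnC : n ∈ (g k).C := by
      rcases hmem2 k hn with h | h
      · exact absurd h hnb
      · exact h
    exact (g k).hgt n hnC m hm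

lemma iInter_nonempty_of_antitone {α : Type} (H : ℕ → Set α) (hfin : (H 0).Finite)
    (hdec : ∀ k, H (k+1) ⊆ H k) (hne : ∀ k, (H k).Nonempty) : (⋂ k, H k).Nonempty := by
  have hanti : Antitone H := antitone_nat_of_succ_le hdec
  have hfin' : ∀ k, (H k).Finite := fun k => hfin.subset (hanti (Nat.zero_le k))
  set n : ℕ → ℕ := fun k => (H k).ncard with hn
  have hrangene : (Set.range n).Nonempty := ⟨n 0, ⟨0, rfl⟩⟩
  obtain ⟨k₀, hk₀⟩ := Nat.sInf_mem hrangene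
  have hminimal : ∀ k, n k₀ ≤ n k := by
    intro k
    rw [hk₀]
    exact Nat.sInf_le ⟨k, rfl⟩
  have heq : ∀ k, k₀ ≤ k → H k = H k₀ := by
    intro k hk
    exact Set.eq_of_subset_of_ncard_le (hanti hk) (hminimal k) (hfin' k₀)
  obtain ⟨x, hx⟩ := hne k₀
  refine ⟨x, Set.mem_iInter.2 ?_⟩
  intro k
  rcases le_total k₀ k with h | h
  · rw [heq k h]; exact hx
  · exact hanti h hx

lemma caseII {F : ι → Set EllPt} {W : J → Set ι} {p : Node}
    (hpf : ∀ x : EllPt, {i | x ∈ F i}.Finite)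
    (hcr : ∀ I : Set ι, CompletelyRamsey (⋃ i ∈ I, F i))
    (hdisj : ∀ j j' : J, j ≠ j' → Disjoint (W j) (W j'))
    (hcov : p.pts ⊆ NU F (MU W Set.univ))
    (hnotI : ∀ r : Node, r.le p → ∀ E : Set J, r.pts ⊆ NU F (MU W E) →
      ∃ E', E' ⊆ E ∧ ¬ dead F (MU W E') r ∧ ¬ dead F (MU W (E \ E')) r) :
    Cardinal.continuum ≤ Cardinal.mk J := by
  classical
  let Good : Node × Set J → Prop := fun s => s.1.le p ∧ s.1.pts ⊆ NU F (MU W s.2)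
  have hstep : ∀ s : {s : Node × Set J // Good s},
      ∃ t : {s : Node × Set J // Good s} × {s : Node × Set J // Good s},
      t.1.1.1.le s.1.1 ∧ t.2.1.1.le s.1.1 ∧ t.1.1.2 ⊆ s.1.2 ∧ t.2.1.2 ⊆ s.1.2 ∧
      Disjoint t.1.1.2 t.2.1.2 ∧ s.1.1.b ⊂ t.1.1.1.b ∧ s.1.1.b ⊂ t.2.1.1.b := by
    rintro ⟨⟨nd, E⟩, hle, hsol⟩
    obtain ⟨E', hE'E, hnd0, hnd1⟩ := hnotI nd hle E hsol
    have ha0 : alive F (MU W E') nd := (dead_or_alive hcr _ nd).resolve_left hnd0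
    have ha1 : alive F (MU W (E \ E')) nd := (dead_or_alive hcr _ nd).resolve_left hnd1
    obtain ⟨u0, hu0le, hu0⟩ := ha0
    obtain ⟨u1, hu1le, hu1⟩ := ha1
    obtain ⟨v0, hv0le, hv0b, hv0pts⟩ := extend_base u0
    obtain ⟨v1, hv1le, hv1b, hv1pts⟩ := extend_base u1
    refine ⟨⟨⟨⟨v0, E'⟩, Node.le_trans (Node.le_trans hv0le hu0le) hle, hv0pts.trans hu0⟩,
            ⟨⟨v1, E \ E'⟩, Node.le_trans (Node.le_trans hv1le hu1le) hle, hv1pts.trans hu1⟩⟩,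
      Node.le_trans hv0le hu0le, Node.le_trans hv1le hu1le, hE'E, diff_subset,
      Set.disjoint_sdiff_right, ?_, ?_⟩
    · exact Finset.ssubset_of_subset_of_ssubset hu0le.1 hv0b
    · exact Finset.ssubset_of_subset_of_ssubset hu1le.1 hv1b
  let stepP : {s : Node × Set J // Good s} →
      {s : Node × Set J // Good s} × {s : Node × Set J // Good s} := fun s => (hstep s).choose
  have hspec : ∀ s : {s : Node × Set J // Good s},
      (stepP s).1.1.1.le s.1.1 ∧ (stepP s).2.1.1.le s.1.1 ∧ (stepP s).1.1.2 ⊆ s.1.2 ∧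
      (stepP s).2.1.2 ⊆ s.1.2 ∧ Disjoint (stepP s).1.1.2 (stepP s).2.1.2 ∧
      s.1.1.b ⊂ (stepP s).1.1.1.b ∧ s.1.1.b ⊂ (stepP s).2.1.1.b :=
    fun s => (hstep s).choose_spec
  have hroot : Good (p, Set.univ) := ⟨Node.le_refl p, hcov⟩
  let Ψ : (ℕ → Bool) → ℕ → {s : Node × Set J // Good s} := fun c =>
    fun k => Nat.rec ⟨(p, Set.univ), hroot⟩ (fun k s => cond (c k) ((stepP s).2) ((stepP s).1)) k
  have hΨsucc : ∀ (c : ℕ → Bool) (k : ℕ),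
      Ψ c (k+1) = cond (c k) ((stepP (Ψ c k)).2) ((stepP (Ψ c k)).1) := fun c k => rfl
  have hagree : ∀ (k : ℕ) (c c' : ℕ → Bool), (∀ m, m < k → c m = c' m) → Ψ c k = Ψ c' k := by
    intro k
    induction k with
    | zero => intro c c' _; rfl
    | succ k ih =>
      intro c c' h
      rw [hΨsucc, hΨsucc, ih c c' (fun m hm => h m (Nat.lt_succ_of_lt hm)),
        h k (Nat.lt_succ_self k)]
  -- basic step relations along a branch
  have hdesc : ∀ (c : ℕ → Bool) (k : ℕ), ((Ψ c (k+1)).1.1).le ((Ψ c k).1.1) := by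
    intro c k
    rw [hΨsucc]
    rcases Bool.eq_false_or_eq_true (c k) with hb | hb <;> rw [hb]
    · rw [Bool.cond_true]; exact (hspec (Ψ c k)).2.1
    · rw [Bool.cond_false]; exact (hspec (Ψ c k)).1
  have hstrict : ∀ (c : ℕ → Bool) (k : ℕ), (Ψ c k).1.1.b ⊂ (Ψ c (k+1)).1.1.b := by
    intro c k
    rw [hΨsucc]
    rcases Bool.eq_false_or_eq_true (c k) with hb | hb <;> rw [hb]
    · rw [Bool.cond_true]; exact (hspec (Ψ c k)).2.2.2.2.2.2
    · rw [Bool.cond_false]; exact (hspec (Ψ c k)).2.2.2.2.2.1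
  have hEdec : ∀ (c : ℕ → Bool) (k : ℕ), (Ψ c (k+1)).1.2 ⊆ (Ψ c k).1.2 := by
    intro c k
    rw [hΨsucc]
    rcases Bool.eq_false_or_eq_true (c k) with hb | hb <;> rw [hb]
    · rw [Bool.cond_true]; exact (hspec (Ψ c k)).2.2.2.1
    · rw [Bool.cond_false]; exact (hspec (Ψ c k)).2.2.1
  -- the branch points and indices
  have key : ∀ c : ℕ → Bool, ∃ η : J, ∀ k, η ∈ (Ψ c k).1.2 := by
    intro c
    obtain ⟨x, hx⟩ := chain_point (fun k => (Ψ c k).1.1) (hdesc c) (hstrict c)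
    have hne : ∀ k, (DD F W x ∩ (Ψ c k).1.2).Nonempty := by
      intro k
      exact mem_NU_MU.1 ((Ψ c k).2.2 (hx k))
    obtain ⟨η, hη⟩ := iInter_nonempty_of_antitone (fun k => DD F W x ∩ (Ψ c k).1.2)
      ((DD_finite hpf hdisj x).inter_of_left _)
      (fun k => Set.inter_subset_inter_right _ (hEdec c k)) hne
    exact ⟨η, fun k => (Set.mem_iInter.1 hη k).2⟩
  choose ηf hηf using key
  have hinj : Function.Injective ηf := by
    intro c c' hcc
    by_contra hne
    have hex : ∃ k, c k ≠ c' k := by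
      by_contra hall
      push_neg at hall
      exact hne (funext hall)
    set k₀ := Nat.find hex with hk₀
    have hdiff : c k₀ ≠ c' k₀ := Nat.find_spec hex
    have hpre : Ψ c k₀ = Ψ c' k₀ := by
      apply hagree
      intro m hm
      by_contra hmne
      exact Nat.find_min hex hm hmne
    have hη1 : ηf c ∈ (Ψ c (k₀+1)).1.2 := hηf c (k₀+1)
    have hη2 : ηf c' ∈ (Ψ c' (k₀+1)).1.2 := hηf c' (k₀+1)
    rw [hΨsucc, hpre] at hη1
    rw [hΨsucc] at hη2
    have hdisj' := (hspec (Ψ c' k₀)).2.2.2.2.1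
    rcases Bool.eq_false_or_eq_true (c k₀) with hb | hb
    · have hb' : c' k₀ = false := by
        rcases Bool.eq_false_or_eq_true (c' k₀) with h | h
        · rw [hb, h] at hdiff; exact absurd rfl hdiff
        · exact h
      rw [hb, Bool.cond_true] at hη1
      rw [hb', Bool.cond_false] at hη2
      exact Set.disjoint_left.1 hdisj' hη2 (hcc ▸ hη1)
    · have hb' : c' k₀ = true := by
        rcases Bool.eq_false_or_eq_true (c' k₀) with h | h
        · exact h
        · rw [hb, h] at hdiff; exact absurd rfl hdiff
      rw [hb, Bool.cond_false] at hη1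
      rw [hb', Bool.cond_true] at hη2
      exact Set.disjoint_left.1 hdisj' (hcc ▸ hη1) hη2
  have := Cardinal.mk_le_of_injective hinj
  rwa [show Cardinal.mk (ℕ → Bool) = Cardinal.continuum by
    rw [← Cardinal.power_def, Cardinal.mk_bool, Cardinal.mk_nat, Cardinal.two_power_aleph0]] at this

/-! ### The Bernstein construction -/

lemma mk_infinite_subsets (p : Node) :
    Cardinal.mk {C : Set ℕ // C ⊆ p.C ∧ C.Infinite} = Cardinal.continuum := by
  have hset : Cardinal.mk (Set ℕ) = Cardinal.continuum := by
    rw [Cardinal.mk_set, Cardinal.mk_nat, Cardinal.two_power_aleph0]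
  apply le_antisymm
  · rw [← hset]
    exact Cardinal.mk_subtype_le _
  · rw [← hset]
    set f : ℕ ↪ ↥p.C := p.hC.natEmbedding with hf
    have hvinj : Function.Injective (fun n : ℕ => ((f n : ↥p.C) : ℕ)) := fun n m h =>
      f.injective (Subtype.ext h)
    set h : Set ℕ → {C : Set ℕ // C ⊆ p.C ∧ C.Infinite} := fun S =>
      ⟨Set.range (fun n => ((f (2*n) : ↥p.C) : ℕ)) ∪
        ((fun n => ((f (2*n+1) : ↥p.C) : ℕ)) '' S), by
        constructor
        · rintro m (⟨n, rfl⟩ | ⟨n, _, rfl⟩) <;> exact (f _).2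
        · apply Set.Infinite.mono (subset_union_left)
          apply Set.infinite_range_of_injective
          intro n m hnm
          have := hvinj hnm
          omega⟩ with hh
    have hinj : Function.Injective h := by
      intro S S' hSS
      have heq : (h S).1 = (h S').1 := by rw [hSS]
      have hdir : ∀ T T' : Set ℕ, (h T).1 = (h T').1 → T ⊆ T' := by
        intro T T' hTT n hn
        have hmem : ((f (2*n+1) : ↥p.C) : ℕ) ∈ (h T).1 := Or.inr ⟨n, hn, rfl⟩
        rw [hTT] at hmem
        rcases hmem with ⟨m, hm⟩ | ⟨m, hmT', hm⟩
        · have := hvinj hm.symm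
          omega
        · have := hvinj hm
          have : n = m := by omega
          rwa [this]
      exact Set.Subset.antisymm (hdir S S' heq) (hdir S' S heq.symm)
    exact Cardinal.mk_le_of_injective hinj

lemma bernstein {F : ι → Set EllPt} {W : J → Set ι} {p : Node}
    (hpf : ∀ x : EllPt, {i | x ∈ F i}.Finite)
    (hcr : ∀ I : Set ι, CompletelyRamsey (⋃ i ∈ I, F i))
    (hdisj : ∀ j j' : J, j ≠ j' → Disjoint (W j) (W j'))
    (hcov : p.pts ⊆ NU F (MU W Set.univ))
    (hmin : ∀ E : Set J, Cardinal.mk E < Cardinal.continuum → dead F (MU W E) p) :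
    False := by
  classical
  set ot := (Cardinal.continuum).ord.ToType with hot
  have hmkot : Cardinal.mk ot = Cardinal.continuum := by
    rw [hot, Cardinal.mk_toType, Cardinal.card_ord]
  obtain ⟨ev⟩ : Nonempty (ot ≃ {C : Set ℕ // C ⊆ p.C ∧ C.Infinite}) := by
    rw [← Cardinal.eq, hmkot, mk_infinite_subsets]
  set CC : ot → Set ℕ := fun γ => (ev γ).1 with hCC
  have CCsub : ∀ γ, CC γ ⊆ p.C := fun γ => (ev γ).2.1
  have CCinf : ∀ γ, (CC γ).Infinite := fun γ => (ev γ).2.2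
  set Bas : ot → Set EllPt := fun γ => EBasic p.b ⟨CC γ, CCinf γ⟩ with hBasdef
  -- picking a point of the γ-th basic set avoiding a dead subunion
  have pick : ∀ (E : Set J), dead F (MU W E) p → ∀ γ : ot, ∃ y : EllPt,
      y ∈ Bas γ ∧ y ∈ p.pts ∧ (DD F W y ∩ E) = ∅ := by
    intro E hE γ
    set nγ : Node := Node.mk' p.b (CC γ) (CCinf γ) with hnγ
    have hnγle : nγ.le p := Node.mk'_le (CCsub γ)
    obtain ⟨C1, inf1, hsub1, hkill1⟩ := hE nγ hnγle
    have hsub1' : C1 ⊆ CC γ := hsub1.trans (Node.mk'_C _ _ _)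
    set y : EllPt := (Node.mk' p.b C1 inf1).selfPt with hy
    have hy1 : y ∈ EBasic p.b ⟨C1, inf1⟩ := by
      rw [← Node.mk'_pts p.b C1 inf1]
      exact (Node.mk' p.b C1 inf1).selfPt_mem
    have hyBas : y ∈ Bas γ := EBasic_mono hsub1' hy1
    have hyp : y ∈ p.pts := EBasic_mono (CCsub γ) hyBas
    refine ⟨y, hyBas, hyp, ?_⟩
    rw [Set.eq_empty_iff_forall_notMem]
    intro j hj
    have : y ∈ NU F (MU W E) := mem_NU_MU.2 ⟨j, hj.1, hj.2⟩
    exact Set.eq_empty_iff_forall_notMem.1 hkill1 y ⟨hy1, this⟩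
  -- the transfinite step
  have bstep : ∀ (γ : ot) (prev : ∀ β, β < γ → EllPt × EllPt × J), ∃ v : EllPt × EllPt × J,
      v.1 ∈ Bas γ ∧ v.2.1 ∈ Bas γ ∧
      (∀ β (hβ : β < γ), (prev β hβ).2.2 ∉ DD F W v.2.1) ∧
      v.2.2 ∈ DD F W v.1 ∧ v.2.2 ∉ DD F W v.2.1 ∧
      (∀ β (hβ : β < γ), v.2.2 ∉ DD F W (prev β hβ).2.1) := by
    intro γ prev
    set Epast : Set J := Set.range (fun β : Set.Iio γ => (prev β.1 β.2).2.2) with hEp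
    have hEpc : Cardinal.mk Epast < Cardinal.continuum :=
      lt_of_le_of_lt Cardinal.mk_range_le (Cardinal.mk_Iio_ord_toType γ)
    obtain ⟨y, hyBas, hyp, hyE⟩ := pick Epast (hmin Epast hEpc) γ
    have hc3 : ∀ β (hβ : β < γ), (prev β hβ).2.2 ∉ DD F W y := by
      intro β hβ hmem
      exact Set.eq_empty_iff_forall_notMem.1 hyE _ ⟨hmem, ⟨⟨β, hβ⟩, rfl⟩⟩
    set Dpast : Set J := (⋃ β : ↥(Set.Iio γ), DD F W ((prev β.1 β.2).2.1)) ∪ DD F W y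
      with hDp
    have hDc : Cardinal.mk Dpast < Cardinal.continuum := by
      have h2 : Cardinal.mk (DD F W y) < Cardinal.continuum :=
        lt_of_lt_of_le ((DD_finite hpf hdisj y).lt_aleph0) Cardinal.aleph0_le_continuum
      have h1 : Cardinal.mk (⋃ β : ↥(Set.Iio γ), DD F W ((prev β.1 β.2).2.1))
          < Cardinal.continuum := by
        by_cases hne : Nonempty ↥(Set.Iio γ)
        · refine lt_of_le_of_lt ((Cardinal.mk_iUnion_le _).trans (mul_le_mul_right
            (ciSup_le' (fun β => (DD_finite hpf hdisj _).lt_aleph0.le)) _)) ?_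
          exact Cardinal.mul_lt_of_lt Cardinal.aleph0_le_continuum
            (Cardinal.mk_Iio_ord_toType γ) Cardinal.aleph0_lt_continuum
        · rw [not_nonempty_iff] at hne
          rw [Set.iUnion_of_empty]
          simpa using Cardinal.continuum_pos
      exact lt_of_le_of_lt (Cardinal.mk_union_le _ _)
        (Cardinal.add_lt_of_lt Cardinal.aleph0_le_continuum h1 h2)
    obtain ⟨x, hxBas, hxp, hxE⟩ := pick Dpast (hmin Dpast hDc) γ
    have hxcov : x ∈ NU F (MU W Set.univ) := hcov hxp
    obtain ⟨ε, hεDD, -⟩ := mem_NU_MU.1 hxcov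
    refine ⟨(x, y, ε), hxBas, hyBas, hc3, hεDD, ?_, ?_⟩
    · intro hmem
      exact Set.eq_empty_iff_forall_notMem.1 hxE ε ⟨hεDD, Or.inr hmem⟩
    · intro β hβ hmem
      exact Set.eq_empty_iff_forall_notMem.1 hxE ε
        ⟨hεDD, Or.inl (Set.mem_iUnion.2 ⟨⟨β, hβ⟩, hmem⟩)⟩
  -- the transfinite recursion
  have wf : WellFounded ((· < ·) : ot → ot → Prop) := IsWellFounded.wf
  set Rec : ot → EllPt × EllPt × J :=
    wf.fix (fun γ IH => (bstep γ IH).choose) with hRec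
  have hReceq : ∀ γ, Rec γ = (bstep γ (fun β _ => Rec β)).choose := by
    intro γ
    rw [hRec]
    exact wf.fix_eq _ γ
  have hspec : ∀ γ, (Rec γ).1 ∈ Bas γ ∧ (Rec γ).2.1 ∈ Bas γ ∧
      (∀ β, β < γ → (Rec β).2.2 ∉ DD F W (Rec γ).2.1) ∧
      (Rec γ).2.2 ∈ DD F W (Rec γ).1 ∧ (Rec γ).2.2 ∉ DD F W (Rec γ).2.1 ∧
      (∀ β, β < γ → (Rec γ).2.2 ∉ DD F W (Rec β).2.1) := by
    intro γ
    have := (bstep γ (fun β _ => Rec β)).choose_spec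
    rw [← hReceq γ] at this
    exact this
  -- the contradiction
  set Estar : Set J := Set.range (fun γ => (Rec γ).2.2) with hEstar
  obtain ⟨B, hB1, hBd⟩ := hcr (MU W Estar) p.b ⟨p.C, p.hC⟩
  have hB1' : B.1 ⊆ p.C := hB1
  set γ₀ : ot := ev.symm ⟨B.1, hB1', B.2⟩ with hγ₀
  have hCCγ₀ : CC γ₀ = B.1 := by
    show ((ev (ev.symm ⟨B.1, hB1', B.2⟩)).1 : Set ℕ) = B.1
    rw [Equiv.apply_symm_apply]
  have hBasγ₀ : Bas γ₀ = EBasic p.b B := by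
    show EBasic p.b ⟨CC γ₀, CCinf γ₀⟩ = EBasic p.b B
    have hBB : (⟨CC γ₀, CCinf γ₀⟩ : EllPt) = B := Subtype.ext hCCγ₀
    rw [hBB]
  rcases hBd with hsolid | hkill
  · have hy := (hspec γ₀).2.1
    rw [hBasγ₀] at hy
    have hyN : (Rec γ₀).2.1 ∈ NU F (MU W Estar) := hsolid hy
    obtain ⟨j, hjDD, hjE⟩ := mem_NU_MU.1 hyN
    have hjE' : ∃ b0, (Rec b0).2.2 = j := hjE
    obtain ⟨b0, rfl⟩ := hjE'
    rcases lt_trichotomy b0 γ₀ with h | h | h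
    · exact (hspec γ₀).2.2.1 b0 h hjDD
    · subst h
      exact (hspec γ₀).2.2.2.2.1 hjDD
    · exact (hspec b0).2.2.2.2.2 γ₀ h hjDD
  · have hkill' : EBasic p.b B ∩ NU F (MU W Estar) = ∅ := hkill
    have hx := (hspec γ₀).1
    rw [hBasγ₀] at hx
    have hxN : (Rec γ₀).1 ∈ NU F (MU W Estar) :=
      mem_NU_MU.2 ⟨(Rec γ₀).2.2, (hspec γ₀).2.2.2.1, ⟨γ₀, rfl⟩⟩
    exact Set.eq_empty_iff_forall_notMem.1 hkill' _ ⟨hx, hxN⟩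

/-! ### Assembling the proof -/

lemma dead_of_null {F : ι → Set EllPt} {i : ι} (hrni : RamseyNull (F i)) (p : Node) :
    dead F ({i} : Set ι) p := by
  intro q hq
  obtain ⟨B, hB1, hB2⟩ := hrni q.b ⟨q.C, q.hC⟩
  refine ⟨B.1, B.2, hB1, ?_⟩
  rw [NU_singleton]
  exact hB2

/-- A "local counterexample" of cardinality `κ`: a node covered by a disjoint family of
index sets, each of which is dead below the node. -/
def CE (F : ι → Set EllPt) (κ : Cardinal) : Prop :=
  ∃ (J : Type) (W : J → Set ι) (p : Node), Cardinal.mk J = κ ∧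
    (∀ j j' : J, j ≠ j' → Disjoint (W j) (W j')) ∧
    (∀ j, dead F (W j) p) ∧ p.pts ⊆ NU F (MU W Set.univ)

theorem no_CE {F : ι → Set EllPt}
    (hpf : ∀ x : EllPt, {i | x ∈ F i}.Finite)
    (hcr : ∀ I : Set ι, CompletelyRamsey (⋃ i ∈ I, F i))
    (κ₀ : Cardinal) (hκc : κ₀ ≤ Cardinal.continuum) (hce : CE F κ₀) : False := by
  classical
  set S : Set Cardinal := {κ | CE F κ} with hS
  have hSne : S.Nonempty := ⟨κ₀, hce⟩
  set κs := sInf S with hκs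
  have hκsS : CE F κs := csInf_mem hSne
  have hκsle : κs ≤ Cardinal.continuum := le_trans (csInf_le (OrderBot.bddBelow S) hce) hκc
  obtain ⟨J, W, p, hJ, hdisj, hdead, hcov⟩ := hκsS
  have hJc : Cardinal.mk J ≤ Cardinal.continuum := hJ ▸ hκsle
  -- minimality
  have hmin' : ∀ E : Set J, Cardinal.mk E < κs → dead F (MU W E) p := by
    intro E hE
    rcases dead_or_alive hcr (MU W E) p with hd | ha
    · exact hd
    obtain ⟨r, hrle, hsolid⟩ := ha
    have hCE : CE F (Cardinal.mk ↥E) := by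
      refine ⟨↥E, fun j => W j.1, r, rfl, ?_, ?_, ?_⟩
      · intro j j' hne
        exact hdisj j.1 j'.1 (fun h => hne (Subtype.ext h))
      · intro j
        exact dead_le hrle (hdead j.1)
      · refine hsolid.trans (NU_mono ?_)
        intro i hi
        rcases Set.mem_iUnion₂.1 hi with ⟨j, hjE, hij⟩
        exact Set.mem_iUnion₂.2 ⟨⟨j, hjE⟩, Set.mem_univ _, hij⟩
    exact absurd (csInf_le (OrderBot.bddBelow S) hCE) (not_le.2 hE)
  -- case split on Case I
  by_cases hI : ∃ r : Node, r.le p ∧ ∃ E : Set J, r.pts ⊆ NU F (MU W E) ∧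
      ∀ E' : Set J, E' ⊆ E → dead F (MU W E') r ∨ dead F (MU W (E \ E')) r
  · obtain ⟨r, hrle, E, hsolid, hdich⟩ := hI
    exact caseI_contra hcr hdead hJc r E hrle hsolid hdich
  · have hnotI : ∀ r : Node, r.le p → ∀ E : Set J, r.pts ⊆ NU F (MU W E) →
        ∃ E', E' ⊆ E ∧ ¬ dead F (MU W E') r ∧ ¬ dead F (MU W (E \ E')) r := by
      intro r hrle E hsolid
      by_contra hcon
      push_neg at hcon
      apply hI
      refine ⟨r, hrle, E, hsolid, ?_⟩
      intro E' hE'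
      by_cases hd : dead F (MU W E') r
      · exact Or.inl hd
      · exact Or.inr (hcon E' hE' hd)
    have hc := caseII hpf hcr hdisj hcov hnotI
    have hκeq : κs = Cardinal.continuum := le_antisymm hκsle (hJ ▸ hc)
    have hmin : ∀ E : Set J, Cardinal.mk E < Cardinal.continuum → dead F (MU W E) p := by
      intro E hE
      exact hmin' E (hκeq ▸ hE)
    exact bernstein hpf hcr hdisj hcov hmin

end LS

/-- Louveau–Simpson theorem: the union of a point-finite family of Ramsey null
sets, all of whose subfamilies have completely Ramsey unions, is Ramsey null. -/
theorem stmt16 {ι : Type} (F : ι → Set EllPt)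
    (hpf : ∀ x : EllPt, {i | x ∈ F i}.Finite)
    (hrn : ∀ i, RamseyNull (F i))
    (hcr : ∀ I : Set ι, CompletelyRamsey (⋃ i ∈ I, F i)) :
    RamseyNull (⋃ i, F i) := by
  classical
  intro a A
  by_contra hcon
  obtain ⟨B₀, hB₀, hd⟩ := hcr Set.univ a A
  rcases hd with hsolid | hkill
  swap
  · refine hcon ⟨B₀, hB₀, ?_⟩
    rw [← Set.biUnion_univ F]
    exact hkill
  -- the covered node
  set p₀ : LS.Node := LS.Node.mk' a B₀.1 B₀.2 with hp₀
  have hp₀pts : p₀.pts = EBasic a B₀ := LS.Node.mk'_pts a B₀.1 B₀.2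
  have hsolid' : p₀.pts ⊆ ⋃ i, F i := by
    rw [hp₀pts]
    refine hsolid.trans ?_
    rw [Set.biUnion_univ]
  -- the ≤ continuum subcover
  have hchoice : ∀ x : ↥(p₀.pts), ∃ i : ι, x.1 ∈ F i := by
    intro x
    exact Set.mem_iUnion.1 (hsolid' x.2)
  choose f hf using hchoice
  set J₀ : Type := ↥(Set.range f) with hJ₀
  set W₀ : J₀ → Set ι := fun i => ({i.1} : Set ι) with hW₀
  have hce : LS.CE F (Cardinal.mk J₀) := by
    refine ⟨J₀, W₀, p₀, rfl, ?_, ?_, ?_⟩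
    · intro j j' hne
      rw [hW₀]
      rw [Set.disjoint_singleton]
      exact fun h => hne (Subtype.ext h)
    · intro j
      exact LS.dead_of_null (hrn j.1) p₀
    · intro x hx
      refine LS.mem_NU.2 ⟨f ⟨x, hx⟩, ?_, hf ⟨x, hx⟩⟩
      refine Set.mem_iUnion₂.2 ⟨⟨f ⟨x, hx⟩, Set.mem_range_self _⟩, Set.mem_univ _, rfl⟩
  have hcard : Cardinal.mk J₀ ≤ Cardinal.continuum := by
    have h1 : Cardinal.mk J₀ ≤ Cardinal.mk ↥(p₀.pts) := Cardinal.mk_range_le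
    have h2 : Cardinal.mk ↥(p₀.pts) ≤ Cardinal.mk EllPt := Cardinal.mk_subtype_le _
    have h3 : Cardinal.mk EllPt ≤ Cardinal.mk (Set ℕ) := Cardinal.mk_subtype_le _
    have h4 : Cardinal.mk (Set ℕ) = Cardinal.continuum := by
      rw [Cardinal.mk_set, Cardinal.mk_nat, Cardinal.two_power_aleph0]
    exact ((h1.trans h2).trans h3).trans (le_of_eq h4)
  exact LS.no_CE hpf hcr (Cardinal.mk J₀) hcard hce
end

section
/- Let ℱ = {F_f : f ∈ 2^ω} be a family of subsets of a non-meager X ⊆ Ellentuck space covering X, and for s ∈ 2^{<ω} put F[s] = ⋃{F_f : s ⊆ f}. If for some s ∈ 2^{<ω} and every t ⊇ s there exists i < 2 such that F[t⌢i] is Ramsey null, then F[s] is covered by countably many Ramsey null sets together with a single member F_{f_s} of ℱ; hence if each F_f is Ramsey null and Ramsey null sets form a σ-ideal, F[s] is Ramsey null. -/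
open Set Topology

/-- `f ∈ 2^ω` extends `s ∈ 2^{<ω}`. -/
def ExtendsL (s : List Bool) (f : ℕ → Bool) : Prop :=
  ∀ i : Fin s.length, f i = s.get i

/-- `F[s] = ⋃ {F_f : s ⊆ f}`. -/
def Fblk (F : (ℕ → Bool) → Set EllPt) (s : List Bool) : Set EllPt :=
  ⋃ f ∈ {f | ExtendsL s f}, F f

/-! ### Auxiliary material -/

lemma ramseyNull_mono {Y Z : Set EllPt} (hYZ : Y ⊆ Z) (hZ : RamseyNull Z) :
    RamseyNull Y := by
  intro a A
  obtain ⟨B, hBA, hB⟩ := hZ a A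
  exact ⟨B, hBA, Set.eq_empty_of_subset_empty (hB ▸ Set.inter_subset_inter_right _ hYZ)⟩

/-- The tail of `A` above `N`. -/
def tailAbove (A : EllPt) (N : ℕ) : EllPt :=
  ⟨A.1 ∩ {x | N < x}, by
    have : A.1 ∩ {x | N < x} = A.1 \ Set.Iic N := by
      ext x; simp [Set.mem_Iic, Nat.not_le]
    rw [this]
    exact A.2.diff (Set.finite_Iic N)⟩

lemma tailAbove_subset (A : EllPt) (N : ℕ) : (tailAbove A N).1 ⊆ A.1 :=
  Set.inter_subset_left

lemma tailAbove_gt (A : EllPt) (N : ℕ) : ∀ x ∈ (tailAbove A N).1, N < x :=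
  fun _ hx => hx.2

section Fusion

variable (X : ℕ → Set EllPt) (h : ∀ n, RamseyNull (X n)) (a : Finset ℕ) (A : EllPt)

/-- A choice of a shrink witnessing Ramsey nullity of `X n` at `[b, A']`. -/
noncomputable def shrinkF (n : ℕ) (b : Finset ℕ) (A' : EllPt) : EllPt :=
  (h n b A').choose

lemma shrinkF_subset (n : ℕ) (b : Finset ℕ) (A' : EllPt) :
    (shrinkF X h n b A').1 ⊆ A'.1 := (h n b A').choose_spec.1

lemma shrinkF_empty (n : ℕ) (b : Finset ℕ) (A' : EllPt) :
    EBasic b (shrinkF X h n b A') ∩ X n = ∅ := (h n b A').choose_spec.2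

/-- The list of pairs handled at step `m`. -/
noncomputable def pairsList (m : ℕ) : List (Finset ℕ × ℕ) :=
  ((Finset.range m).powerset ×ˢ Finset.range (m + 1)).toList

/-- One fusion step: shrink against all pairs scheduled at step `m`. -/
noncomputable def foldStep (m : ℕ) (kf : ℕ → ℕ) (A' : EllPt) : EllPt :=
  (pairsList m).foldl (fun A'' p => shrinkF X h p.2 (a ∪ p.1.image kf) A'') A'

lemma foldl_sub (f : EllPt → (Finset ℕ × ℕ) → EllPt)
    (hf : ∀ A' p, (f A' p).1 ⊆ A'.1) :
    ∀ (l : List (Finset ℕ × ℕ)) (A' : EllPt), (l.foldl f A').1 ⊆ A'.1 := by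
  intro l
  induction l with
  | nil => intro A'; exact fun x hx => hx
  | cons q t ih =>
      intro A'
      exact fun x hx => hf A' q (ih (f A' q) hx)

lemma foldl_reach (f : EllPt → (Finset ℕ × ℕ) → EllPt)
    (hf : ∀ A' p, (f A' p).1 ⊆ A'.1) :
    ∀ (l : List (Finset ℕ × ℕ)) (A' : EllPt) (p : Finset ℕ × ℕ), p ∈ l →
      ∃ C : EllPt, (l.foldl f A').1 ⊆ (f C p).1 ∧ (f C p).1 ⊆ A'.1 := by
  intro l
  induction l with
  | nil => intro A' p hp; exact absurd hp List.not_mem_nil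
  | cons q t ih =>
      intro A' p hp
      rcases List.mem_cons.mp hp with rfl | hp
      · exact ⟨A', foldl_sub f hf t (f A' p), fun x hx => hf A' p hx⟩
      · obtain ⟨C, h1, h2⟩ := ih (f A' q) p hp
        exact ⟨C, h1, fun x hx => hf A' q (h2 hx)⟩

lemma foldStep_subset (m : ℕ) (kf : ℕ → ℕ) (A' : EllPt) :
    (foldStep X h a m kf A').1 ⊆ A'.1 :=
  foldl_sub _ (fun A'' p => shrinkF_subset X h p.2 _ A'') _ _

/-- The fusion sequence: current set together with chosen pivots so far. -/
noncomputable def Pseq : ℕ → EllPt × (ℕ → ℕ)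
  | 0 => (tailAbove A (a.sup id), fun _ => 0)
  | m + 1 =>
      let pr := Pseq m
      let Fm := foldStep X h a m pr.2 pr.1
      (tailAbove Fm (sInf Fm.1), Function.update pr.2 m (sInf Fm.1))

/-- The set after the shrinks of step `m`. -/
noncomputable def FmS (m : ℕ) : EllPt :=
  foldStep X h a m (Pseq X h a A m).2 (Pseq X h a A m).1

/-- The pivot chosen at step `m`. -/
noncomputable def kseq (m : ℕ) : ℕ := sInf (FmS X h a A m).1

lemma Pseq_succ (m : ℕ) :
    Pseq X h a A (m + 1) =
      (tailAbove (FmS X h a A m) (kseq X h a A m),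
        Function.update (Pseq X h a A m).2 m (kseq X h a A m)) := rfl

lemma kseq_mem_FmS (m : ℕ) : kseq X h a A m ∈ (FmS X h a A m).1 :=
  Nat.sInf_mem (FmS X h a A m).2.nonempty

lemma FmS_subset (m : ℕ) : (FmS X h a A m).1 ⊆ (Pseq X h a A m).1.1 :=
  foldStep_subset X h a m _ _

lemma Pseq_succ_subset (m : ℕ) :
    (Pseq X h a A (m + 1)).1.1 ⊆ (FmS X h a A m).1 := by
  rw [Pseq_succ]; exact tailAbove_subset _ _

lemma Pseq_succ_gt (m : ℕ) :
    ∀ x ∈ (Pseq X h a A (m + 1)).1.1, kseq X h a A m < x := by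
  rw [Pseq_succ]; exact tailAbove_gt _ _

lemma Pseq_mono : ∀ {i j : ℕ}, i ≤ j → (Pseq X h a A j).1.1 ⊆ (Pseq X h a A i).1.1 := by
  intro i j hij
  induction j with
  | zero => have : i = 0 := Nat.le_zero.mp hij; subst this; exact fun x hx => hx
  | succ m ih =>
      rcases Nat.lt_or_ge i (m + 1) with hlt | hge
      · exact fun x hx =>
          ih (Nat.lt_succ_iff.mp hlt)
            (FmS_subset X h a A m (Pseq_succ_subset X h a A m hx))
      · have : i = m + 1 := le_antisymm hij hge
        subst this; exact fun x hx => hx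

lemma kseq_mem_Pseq {m j : ℕ} (hmj : m ≤ j) :
    kseq X h a A j ∈ (Pseq X h a A m).1.1 :=
  Pseq_mono X h a A hmj (FmS_subset X h a A j (kseq_mem_FmS X h a A j))

lemma kseq_strictMono : StrictMono (kseq X h a A) := by
  apply strictMono_nat_of_lt_succ
  intro m
  exact Pseq_succ_gt X h a A m _
    (Pseq_mono X h a A (le_refl (m + 1))
      (by exact FmS_subset X h a A (m+1) (kseq_mem_FmS X h a A (m+1)) |>
        (fun hx => hx)))

lemma kseq_mem_A (m : ℕ) : kseq X h a A m ∈ A.1 :=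
  tailAbove_subset A (a.sup id) (kseq_mem_Pseq X h a A (Nat.zero_le m))

lemma kseq_gt_sup (m : ℕ) : a.sup id < kseq X h a A m :=
  tailAbove_gt A (a.sup id) _ (kseq_mem_Pseq X h a A (Nat.zero_le m))

lemma Pseq_snd_agree : ∀ (m i : ℕ), i < m → (Pseq X h a A m).2 i = kseq X h a A i := by
  intro m
  induction m with
  | zero => intro i hi; omega
  | succ m ih =>
      intro i hi
      rw [Pseq_succ]
      rcases Nat.lt_or_ge i m with hlt | hge
      · simp only [Function.update]
        rw [dif_neg (by omega)]
        exact ih i hlt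
      · have : i = m := by omega
        subst this
        simp [Function.update]

/-- For `j ≥ m`, the pivot `kseq j` belongs to `FmS m`. -/
lemma kseq_mem_FmS_of_le {m j : ℕ} (hmj : m ≤ j) :
    kseq X h a A j ∈ (FmS X h a A m).1 := by
  rcases Nat.eq_or_lt_of_le hmj with rfl | hlt
  · exact kseq_mem_FmS X h a A m
  · exact Pseq_succ_subset X h a A m (Pseq_mono X h a A hlt (
      FmS_subset X h a A j (kseq_mem_FmS X h a A j)))

end Fusion

theorem ramseyNull_iUnion (X : ℕ → Set EllPt) (h : ∀ n, RamseyNull (X n)) :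
    RamseyNull (⋃ n, X n) := by
  classical
  intro a A
  set k : ℕ → ℕ := kseq X h a A with hk
  have kinj : Function.Injective k := (kseq_strictMono X h a A).injective
  refine ⟨⟨Set.range k, Set.infinite_range_of_injective kinj⟩, ?_, ?_⟩
  · rintro x ⟨m, rfl⟩; exact kseq_mem_A X h a A m
  · by_contra hne
    obtain ⟨C, hCB, hCX⟩ := Set.nonempty_iff_ne_empty.mpr hne
    obtain ⟨hC1, hC2, hC3⟩ := hCB
    simp only [Set.mem_iUnion] at hCX
    obtain ⟨n, hCn⟩ := hCX
    -- the pair handled at step `m := n`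
    set m := n with hm
    set u : Finset ℕ := (Finset.range m).filter (fun i => k i ∈ C.1) with hu
    have humem : ∀ i, i ∈ u ↔ (i < m ∧ k i ∈ C.1) := by
      intro i; rw [hu]; simp [Finset.mem_filter, Finset.mem_range]
    have hpmem : (u, n) ∈ pairsList m := by
      rw [pairsList, Finset.mem_toList, Finset.mem_product]
      refine ⟨Finset.mem_powerset.mpr ?_, Finset.mem_range.mpr (by omega)⟩
      exact fun i hi => Finset.mem_range.mpr ((humem i).mp hi).1
    -- reach the shrink for this pair inside step `m`
    obtain ⟨C', hsub1, hsub2⟩ :=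
      foldl_reach (fun A'' p => shrinkF X h p.2 (a ∪ p.1.image (Pseq X h a A m).2) A'')
        (fun A'' p => shrinkF_subset X h p.2 _ A'') (pairsList m)
        (Pseq X h a A m).1 (u, n) hpmem
    set b : Finset ℕ := a ∪ u.image ((Pseq X h a A m).2) with hb
    set B : EllPt := shrinkF X h n b C' with hB
    have hFmB : (FmS X h a A m).1 ⊆ B.1 := hsub1
    have hempty : EBasic b B ∩ X n = ∅ := shrinkF_empty X h n b C'
    -- images under the recorded pivots agree with `k` on `u`
    have himg : u.image ((Pseq X h a A m).2) = u.image k := by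
      apply Finset.image_congr
      intro i hi
      exact Pseq_snd_agree X h a A m i ((humem i).mp hi).1
    have hbC : (↑b : Set ℕ) ⊆ C.1 := by
      intro x hx
      rw [hb, Finset.coe_union, himg] at hx
      rcases hx with hx | hx
      · exact hC1 hx
      · simp only [Finset.coe_image, Set.mem_image, Finset.mem_coe] at hx
        obtain ⟨i, hi, rfl⟩ := hx
        exact ((humem i).mp hi).2
    -- every element of `C` outside `b` is a late pivot
    have hlate : ∀ q ∈ C.1, q ∉ (b : Set ℕ) → ∃ i, m ≤ i ∧ q = k i := by
      intro q hq hqb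
      have hqa : q ∉ (a : Set ℕ) := fun hqa => hqb (by
        rw [hb, Finset.coe_union]; exact Or.inl hqa)
      rcases hC2 hq with hx | hx
      · exact absurd hx hqa
      · obtain ⟨i, rfl⟩ := hx
        refine ⟨i, ?_, rfl⟩
        by_contra hlt
        push_neg at hlt
        apply hqb
        rw [hb, Finset.coe_union, himg]
        refine Or.inr ?_
        simp only [Finset.coe_image, Set.mem_image, Finset.mem_coe]
        exact ⟨i, (humem i).mpr ⟨hlt, hq⟩, rfl⟩
    have hCmem : C ∈ EBasic b B := by
      refine ⟨hbC, ?_, ?_⟩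
      · intro q hq
        by_cases hqb : q ∈ (↑b : Set ℕ)
        · exact Or.inl hqb
        · obtain ⟨i, hmi, rfl⟩ := hlate q hq hqb
          exact Or.inr (hFmB (kseq_mem_FmS_of_le X h a A hmi))
      · intro p hp q hq hqb
        obtain ⟨i, hmi, rfl⟩ := hlate q hq (by simpa using hqb)
        rw [hb, Finset.mem_union] at hp
        rcases hp with hp | hp
        · exact lt_of_le_of_lt (Finset.le_sup (f := id) hp) (kseq_gt_sup X h a A i)
        · rw [himg, Finset.mem_image] at hp
          obtain ⟨i', hi', rfl⟩ := hp
          have : i' < m := ((humem i').mp hi').1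
          exact kseq_strictMono X h a A (by omega)
    exact absurd hempty (Set.nonempty_iff_ne_empty.mp ⟨C, hCmem, hCn⟩)

section Branch

variable (F : (ℕ → Bool) → Set EllPt) (s : List Bool)
variable (H : ∀ t : List Bool, s <+: t → ∃ i : Bool, RamseyNull (Fblk F (t ++ [i])))

/-- The "bad" direction chosen at node `t`. -/
noncomputable def iFun (t : List Bool) : Bool :=
  if ht : s <+: t then (H t ht).choose else false

lemma iFun_spec {t : List Bool} (ht : s <+: t) :
    RamseyNull (Fblk F (t ++ [iFun F s H t])) := by
  rw [iFun, dif_pos ht]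
  exact (H t ht).choose_spec

/-- The branch of nodes avoiding the bad directions. -/
noncomputable def nodeSeq : ℕ → List Bool
  | 0 => s
  | n + 1 => nodeSeq n ++ [!(iFun F s H (nodeSeq n))]

lemma nodeSeq_prefix_s (n : ℕ) : s <+: nodeSeq F s H n := by
  induction n with
  | zero => exact List.prefix_rfl
  | succ m ih => exact ih.trans (List.prefix_append _ _)

lemma nodeSeq_length (n : ℕ) : (nodeSeq F s H n).length = s.length + n := by
  induction n with
  | zero => rfl
  | succ m ih => simp [nodeSeq, ih]; omega

lemma nodeSeq_prefix_mono {n m : ℕ} (hnm : n ≤ m) :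
    nodeSeq F s H n <+: nodeSeq F s H m := by
  induction m with
  | zero => have : n = 0 := Nat.le_zero.mp hnm; subst this; exact List.prefix_rfl
  | succ j ih =>
      rcases Nat.lt_or_ge n (j + 1) with hlt | hge
      · exact (ih (Nat.lt_succ_iff.mp hlt)).trans (List.prefix_append _ _)
      · have : n = j + 1 := le_antisymm hnm hge
        subst this; exact List.prefix_rfl

/-- The limit branch. -/
noncomputable def fsF (k : ℕ) : Bool :=
  (nodeSeq F s H (k + 1)).get
    ⟨k, by rw [nodeSeq_length]; omega⟩

lemma extends_nodeSeq (n : ℕ) : ExtendsL (nodeSeq F s H n) (fsF F s H) := by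
  intro i
  show fsF F s H i.1 = _
  rw [fsF, List.get_eq_getElem, List.get_eq_getElem]
  have hi1 : i.1 < (nodeSeq F s H (i.1 + 1)).length := by
    have := nodeSeq_length F s H (i.1 + 1); omega
  rcases le_or_gt n (i.1 + 1) with hle | hlt
  · exact ((nodeSeq_prefix_mono F s H hle).getElem i.2).symm
  · exact (nodeSeq_prefix_mono F s H hlt.le).getElem hi1

lemma extendsL_append_iff (t : List Bool) (b : Bool) (f : ℕ → Bool) :
    ExtendsL (t ++ [b]) f ↔ ExtendsL t f ∧ f t.length = b := by
  constructor
  · intro hf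
    constructor
    · intro i
      have := hf ⟨i.1, by simp⟩
      simp only [List.get_eq_getElem] at this ⊢
      rwa [List.getElem_append_left i.2] at this
    · have := hf ⟨t.length, by simp⟩
      simp only [List.get_eq_getElem] at this
      rwa [List.getElem_concat_length (l := t) (a := b) (i := t.length) rfl] at this
  · rintro ⟨h1, h2⟩ i
    simp only [List.get_eq_getElem]
    rcases Nat.lt_or_ge i.1 t.length with hlt | hge
    · rw [List.getElem_append_left hlt]
      exact h1 ⟨i.1, hlt⟩
    · have hi : i.1 = t.length := by have := i.2; simp at this; omega
      rw [List.getElem_concat_length (l := t) (a := b) (i := i.1) hi]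
      rw [hi]; exact h2

lemma mem_Fblk {x : EllPt} {t : List Bool} :
    x ∈ Fblk F t ↔ ∃ f, ExtendsL t f ∧ x ∈ F f := by
  simp [Fblk]

lemma fblk_cover :
    Fblk F s ⊆ F (fsF F s H) ∪
      ⋃ n, Fblk F (nodeSeq F s H n ++ [iFun F s H (nodeSeq F s H n)]) := by
  classical
  intro x hx
  obtain ⟨f, hf, hxf⟩ := (mem_Fblk F).mp hx
  by_cases hall : ∀ n, ExtendsL (nodeSeq F s H n) f
  · left
    have : f = fsF F s H := by
      funext k
      have h1 := hall (k + 1) ⟨k, by rw [nodeSeq_length]; omega⟩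
      exact h1
    rwa [← this]
  · right
    push_neg at hall
    have hex : ∃ n, ¬ ExtendsL (nodeSeq F s H n) f := hall
    have h0 : ExtendsL (nodeSeq F s H 0) f := hf
    have hnspec := Nat.find_spec hex
    have hne0 : Nat.find hex ≠ 0 := fun h => hnspec (by rw [h]; exact h0)
    obtain ⟨m, hmeq⟩ : ∃ m, Nat.find hex = m + 1 := ⟨Nat.find hex - 1, by omega⟩
    have hm : ExtendsL (nodeSeq F s H m) f :=
      not_not.mp (Nat.find_min hex (by omega))
    rw [hmeq] at hnspec
    have hnot : ¬ ExtendsL (nodeSeq F s H m ++ [!(iFun F s H (nodeSeq F s H m))]) f :=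
      hnspec
    rw [extendsL_append_iff] at hnot
    have hval : f (nodeSeq F s H m).length = iFun F s H (nodeSeq F s H m) := by
      rcases Bool.eq_false_or_eq_true (f (nodeSeq F s H m).length) with hb | hb <;>
        rcases Bool.eq_false_or_eq_true (iFun F s H (nodeSeq F s H m)) with hb' | hb' <;>
        simp [hb, hb'] at hnot ⊢ <;> exact hnot hm
    refine Set.mem_iUnion.mpr ⟨m, (mem_Fblk F).mpr ⟨f, ?_, hxf⟩⟩
    rw [extendsL_append_iff]
    exact ⟨hm, hval⟩

end Branch


/-- If `F = {F_f : f ∈ 2^ω}` covers a non-meager `X` and for some `s` every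
`t ⊇ s` has a child `t⌢i` with `F[t⌢i]` Ramsey null, then `F[s]` is covered by a
single member `F_{f_s}` together with countably many Ramsey null sets; hence if
each `F_f` is Ramsey null then `F[s]` is Ramsey null. -/
theorem stmt17 (X : Set EllPt) (hX : ¬ IsMeagre X)
    (F : (ℕ → Bool) → Set EllPt) (hsub : ∀ f, F f ⊆ X) (hcov : X ⊆ ⋃ f, F f)
    (s : List Bool)
    (H : ∀ t : List Bool, s <+: t → ∃ i : Bool, RamseyNull (Fblk F (t ++ [i]))) :
    (∃ fs : ℕ → Bool, ExtendsL s fs ∧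
        ∃ g : ℕ → Set EllPt, (∀ n, RamseyNull (g n)) ∧ Fblk F s ⊆ F fs ∪ ⋃ n, g n) ∧
      ((∀ f, RamseyNull (F f)) → RamseyNull (Fblk F s)) := by
  have hpart1 : ∃ fs : ℕ → Bool, ExtendsL s fs ∧
      ∃ g : ℕ → Set EllPt, (∀ n, RamseyNull (g n)) ∧ Fblk F s ⊆ F fs ∪ ⋃ n, g n := by
    refine ⟨fsF F s H, extends_nodeSeq F s H 0,
      fun n => Fblk F (nodeSeq F s H n ++ [iFun F s H (nodeSeq F s H n)]),
      fun n => iFun_spec F s H (nodeSeq_prefix_s F s H n), fblk_cover F s H⟩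
  refine ⟨hpart1, fun hRN => ?_⟩
  obtain ⟨fs, _, g, hg, hcover⟩ := hpart1
  have hcover' : Fblk F s ⊆ ⋃ n, (fun n => Nat.casesOn n (F fs) g) n := by
    intro x hx
    rcases hcover hx with hx | hx
    · exact Set.mem_iUnion.mpr ⟨0, hx⟩
    · obtain ⟨n, hn⟩ := Set.mem_iUnion.mp hx
      exact Set.mem_iUnion.mpr ⟨n + 1, hn⟩
  refine ramseyNull_mono hcover' (ramseyNull_iUnion _ ?_)
  intro n
  cases n with
  | zero => exact hRN fs
  | succ m => exact hg m
end
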